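/- arXiv:1810.03223 — 6 statements merged into one kernel-verified Lean document; each statement's English description precedes it below -/
import Mathlib

section
/- Let ξ: [0,1) → [0,1) be a generalized Lüroth map for a partition (W_i) of [0,1) into half-open intervals (i.e., ξ maps each W_i affinely and increasingly onto [0,1)). If for each n, φ_n: [0,1) → ℝ is measurable with respect to the σ-algebra generated by the partition (W_i), then the random variables (φ_n ∘ ξ^{n-1})_{n≥1} are mutually independent with respect to Lebesgue measure. -/
open MeasureTheory Set

lemma aux_affine (c r : ℝ) (hr : 0 < r) (S : Set ℝ) :
    volume ((fun x => (x - c) / r) ⁻¹' S) = ENNReal.ofReal r * volume S := by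
  have h1 : (fun x : ℝ => (x - c) / r) = (fun x : ℝ => x * r⁻¹) ∘ (fun x : ℝ => x + (-c)) := by
    ext x; simp [div_eq_mul_inv, sub_eq_add_neg]
  rw [h1, preimage_comp]
  have h2 : volume ((fun x : ℝ => x * r⁻¹) ⁻¹' S) = ENNReal.ofReal r * volume S := by
    rw [Real.volume_preimage_mul_right (inv_ne_zero hr.ne') S]
    congr 1
    rw [inv_inv, abs_of_pos hr]
  rw [← h2]
  exact measure_preimage_add_right volume (-c) _

section Aux
variable {I : Type*} [Countable I] (c d : I → ℝ) (hcd : ∀ i, c i < d i)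
  (hdisj : Pairwise (Function.onFun Disjoint (fun i => Set.Ico (c i) (d i))))
  (hcover : (⋃ i, Set.Ico (c i) (d i)) = Set.Ico (0 : ℝ) 1)
  (ξ : ℝ → ℝ) (hmeas : Measurable ξ)
  (hξ : ∀ i, ∀ x ∈ Set.Ico (c i) (d i), ξ x = (x - c i) / (d i - c i))

include hcd hξ in
lemma aux_one (i : I) (A : Set ℝ) :
    volume (Set.Ico (c i) (d i) ∩ ξ ⁻¹' A)
      = volume (Set.Ico (c i) (d i)) * volume (A ∩ Set.Ico (0 : ℝ) 1) := by
  have hr : 0 < d i - c i := sub_pos.2 (hcd i)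
  have hset : Set.Ico (c i) (d i) ∩ ξ ⁻¹' A
      = (fun x => (x - c i) / (d i - c i)) ⁻¹' (A ∩ Set.Ico (0 : ℝ) 1) := by
    ext x
    simp only [mem_inter_iff, mem_preimage, mem_Ico]
    constructor
    · rintro ⟨hx, hA⟩
      have := hξ i x hx
      rw [this] at hA
      refine ⟨hA, div_nonneg (by linarith [hx.1]) hr.le, ?_⟩
      rw [div_lt_one hr]; linarith [hx.2]
    · rintro ⟨hA, h0, h1⟩
      rw [div_lt_one hr] at h1
      have h0' : c i ≤ x := by
        rcases div_nonneg_iff.mp h0 with ⟨ha, _⟩ | ⟨_, hb⟩ <;> linarith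
      have hx : x ∈ Set.Ico (c i) (d i) := ⟨h0', by linarith⟩
      exact ⟨hx, (hξ i x hx) ▸ hA⟩
  rw [hset, aux_affine _ _ hr, Real.volume_Ico]

include hcd hdisj hcover hmeas hξ in
lemma aux_full (A : Set ℝ) (hA : MeasurableSet A) :
    volume (Set.Ico (0 : ℝ) 1 ∩ ξ ⁻¹' A) = volume (A ∩ Set.Ico (0 : ℝ) 1) := by
  have hEq : Set.Ico (0 : ℝ) 1 ∩ ξ ⁻¹' A = ⋃ i, (Set.Ico (c i) (d i) ∩ ξ ⁻¹' A) := by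
    rw [← hcover, iUnion_inter]
  have hdisj' : Pairwise (Function.onFun Disjoint
      (fun i => Set.Ico (c i) (d i) ∩ ξ ⁻¹' A)) := fun i j hij =>
    ((hdisj hij).mono (inter_subset_left) (inter_subset_left))
  have hmble : ∀ i, MeasurableSet (Set.Ico (c i) (d i) ∩ ξ ⁻¹' A) := fun i =>
    measurableSet_Ico.inter (hmeas hA)
  rw [hEq, measure_iUnion hdisj' hmble]
  have : ∀ i, volume (Set.Ico (c i) (d i) ∩ ξ ⁻¹' A)
      = volume (Set.Ico (c i) (d i)) * volume (A ∩ Set.Ico (0 : ℝ) 1) :=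
    fun i => aux_one c d hcd ξ hξ i A
  simp_rw [this]
  rw [ENNReal.tsum_mul_right]
  have : ∑' i, volume (Set.Ico (c i) (d i)) = 1 := by
    rw [← measure_iUnion hdisj (fun i => measurableSet_Ico), hcover]
    simp
  rw [this, one_mul]

include hcd hcover hξ in
lemma aux_mapsto : ∀ x ∈ Set.Ico (0 : ℝ) 1, ξ x ∈ Set.Ico (0 : ℝ) 1 := by
  intro x hx
  rw [← hcover] at hx
  obtain ⟨i, hi⟩ := mem_iUnion.1 hx
  rw [hξ i x hi]
  have hr : 0 < d i - c i := sub_pos.2 (hcd i)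
  rw [mem_Ico] at hi ⊢
  constructor
  · exact div_nonneg (by linarith [hi.1]) hr.le
  · rw [div_lt_one hr]; linarith [hi.2]

include hcd hdisj hcover hmeas hξ in
lemma aux_main (k : ℕ) (B : ℕ → Set ℝ)
    (hB : ∀ j, (∃ i, B j = Set.Ico (c i) (d i)) ∨ B j = Set.Ico (0 : ℝ) 1) :
    volume (Set.Ico (0 : ℝ) 1 ∩ ⋂ j ∈ Finset.range k, ξ^[j] ⁻¹' B j)
      = ∏ j ∈ Finset.range k, volume (B j) := by
  induction k generalizing B with
  | zero => simp
  | succ k ih =>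
    have hBsub : ∀ j, B j ⊆ Set.Ico (0 : ℝ) 1 := by
      intro j
      rcases hB j with ⟨i, hi⟩ | h
      · rw [hi, ← hcover]; exact subset_iUnion (fun i => Set.Ico (c i) (d i)) i
      · rw [h]
    have hBm : ∀ j, MeasurableSet (B j) := by
      intro j
      rcases hB j with ⟨i, hi⟩ | h
      · rw [hi]; exact measurableSet_Ico
      · rw [h]; exact measurableSet_Ico
    set C : Set ℝ := Set.Ico (0 : ℝ) 1 ∩ ⋂ j ∈ Finset.range k, ξ^[j] ⁻¹' B (j + 1) with hC
    have hCm : MeasurableSet C := by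
      refine measurableSet_Ico.inter (MeasurableSet.biInter (Finset.range k).countable_toSet
        fun j _ => (hmeas.iterate j) (hBm (j + 1)))
    have hCsub : C ⊆ Set.Ico (0 : ℝ) 1 := inter_subset_left
    have hsplit : Set.Ico (0 : ℝ) 1 ∩ ⋂ j ∈ Finset.range (k + 1), ξ^[j] ⁻¹' B j
        = B 0 ∩ ξ ⁻¹' C := by
      ext x
      simp only [mem_inter_iff, mem_iInter, Finset.mem_range, mem_preimage, hC]
      constructor
      · rintro ⟨hx01, hj⟩
        refine ⟨by simpa using hj 0 (Nat.succ_pos k),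
          aux_mapsto c d hcd hcover ξ hξ x hx01, fun j hjk => ?_⟩
        have := hj (j + 1) (Nat.succ_lt_succ hjk)
        rwa [Function.iterate_succ_apply] at this
      · rintro ⟨hB0, hξx01, hj⟩
        refine ⟨hBsub 0 hB0, fun j hjk => ?_⟩
        cases j with
        | zero => simpa using hB0
        | succ j =>
          rw [Function.iterate_succ_apply]
          exact hj j (Nat.lt_of_succ_lt_succ hjk)
    rw [hsplit]
    have hCvol : volume C = ∏ j ∈ Finset.range k, volume (B (j + 1)) :=
      ih (fun j => B (j + 1)) (fun j => hB (j + 1))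
    have hCvol' : volume (C ∩ Set.Ico (0:ℝ) 1) = volume C := by
      rw [inter_eq_self_of_subset_left hCsub]
    rcases hB 0 with ⟨i, hi⟩ | h
    · rw [hi]
      rw [aux_one c d hcd ξ hξ i C, hCvol', hCvol, Finset.prod_range_succ']
      rw [hi, mul_comm]
    · have : B 0 ∩ ξ ⁻¹' C = Set.Ico (0:ℝ) 1 ∩ ξ ⁻¹' C := by rw [h]
      rw [this, aux_full c d hcd hdisj hcover ξ hmeas hξ C hCm, hCvol', hCvol,
        Finset.prod_range_succ', h]
      simp

include hcd hcover hξ in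
lemma aux_iter : ∀ n, ∀ x ∈ Set.Ico (0 : ℝ) 1, ξ^[n] x ∈ Set.Ico (0 : ℝ) 1 := by
  intro n
  induction n with
  | zero => intro x hx; simpa using hx
  | succ n ih =>
    intro x hx
    rw [Function.iterate_succ_apply]
    exact ih _ (aux_mapsto c d hcd hcover ξ hξ x hx)

include hcd hdisj hcover hmeas hξ in
lemma aux_single (n : ℕ) (B0 : Set ℝ)
    (hB0 : (∃ i, B0 = Set.Ico (c i) (d i)) ∨ B0 = Set.Ico (0 : ℝ) 1) :
    volume (Set.Ico (0 : ℝ) 1 ∩ ξ^[n] ⁻¹' B0) = volume B0 := by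
  classical
  set B : ℕ → Set ℝ := fun j => if j = n then B0 else Set.Ico (0 : ℝ) 1 with hBdef
  have hB : ∀ j, (∃ i, B j = Set.Ico (c i) (d i)) ∨ B j = Set.Ico (0 : ℝ) 1 := by
    intro j
    by_cases hj : j = n
    · simpa [hBdef, hj] using hB0
    · right; simp [hBdef, hj]
  have hkey : Set.Ico (0 : ℝ) 1 ∩ ξ^[n] ⁻¹' B0
      = Set.Ico (0 : ℝ) 1 ∩ ⋂ j ∈ Finset.range (n + 1), ξ^[j] ⁻¹' B j := by
    ext x
    simp only [mem_inter_iff, mem_iInter, Finset.mem_range, mem_preimage]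
    constructor
    · rintro ⟨hx01, hx⟩
      refine ⟨hx01, fun j hjk => ?_⟩
      by_cases hj : j = n
      · subst hj; simpa [hBdef] using hx
      · simp only [hBdef, if_neg hj]
        exact aux_iter c d hcd hcover ξ hξ j x hx01
    · rintro ⟨hx01, hx⟩
      refine ⟨hx01, ?_⟩
      have := hx n (Nat.lt_succ_self n)
      simpa [hBdef] using this
  rw [hkey, aux_main c d hcd hdisj hcover ξ hmeas hξ (n + 1) B hB]
  rw [Finset.prod_eq_single n (fun j _ hj => by simp [hBdef, hj, Real.volume_Ico])
    (fun h => absurd (Finset.self_mem_range_succ n) h)]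
  simp [hBdef]

end Aux

/-- For a generalized Lüroth map `ξ` associated to a partition of `[0,1)` into half-open
intervals `W_i = [c_i, d_i)` (so `ξ` maps each `W_i` affinely and increasingly onto `[0,1)`),
if each `φ_n : [0,1) → ℝ` is measurable with respect to the σ-algebra generated by the
partition `(W_i)`, then the random variables `(φ_n ∘ ξ^{n-1})_{n ≥ 1}` are mutually independent
with respect to Lebesgue measure on `[0,1)`. -/
theorem stmt4 {I : Type*} [Countable I] (c d : I → ℝ) (hcd : ∀ i, c i < d i)
    (hdisj : Pairwise (Function.onFun Disjoint (fun i => Set.Ico (c i) (d i))))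
    (hcover : (⋃ i, Set.Ico (c i) (d i)) = Set.Ico (0 : ℝ) 1)
    (ξ : ℝ → ℝ) (hmeas : Measurable ξ)
    (hξ : ∀ i, ∀ x ∈ Set.Ico (c i) (d i), ξ x = (x - c i) / (d i - c i))
    (φ : ℕ → ℝ → ℝ)
    (hφ : ∀ n, @Measurable ℝ ℝ
      (MeasurableSpace.generateFrom {S : Set ℝ | ∃ i, S = Set.Ico (c i) (d i)}) _ (φ n)) :
    ProbabilityTheory.iIndepFun (m := fun _ : ℕ => Real.measurableSpace)
      (fun n x => φ n (ξ^[n] x)) (volume.restrict (Set.Ico (0 : ℝ) 1)) := by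
  classical
  haveI : Nonempty I := by
    have h0 : (0 : ℝ) ∈ ⋃ i, Set.Ico (c i) (d i) := by
      rw [hcover]; exact ⟨le_refl 0, zero_lt_one⟩
    obtain ⟨i, -⟩ := mem_iUnion.1 h0
    exact ⟨i⟩
  set μ := volume.restrict (Set.Ico (0 : ℝ) 1) with hμdef
  have hGle : MeasurableSpace.generateFrom {S : Set ℝ | ∃ i, S = Set.Ico (c i) (d i)}
      ≤ Real.measurableSpace :=
    MeasurableSpace.generateFrom_le (by rintro S ⟨i, rfl⟩; exact measurableSet_Ico)
  set π : ℕ → Set (Set ℝ) :=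
    fun n => (fun S => ξ^[n] ⁻¹' S) '' {S : Set ℝ | ∃ i, S = Set.Ico (c i) (d i)} with hπdef
  -- independence of the comap σ-algebras
  haveI : IsProbabilityMeasure μ := ⟨by
    rw [hμdef, Measure.restrict_apply_univ, Real.volume_Ico]; norm_num⟩
  have hind : ProbabilityTheory.iIndep (fun n =>
      (MeasurableSpace.generateFrom {S : Set ℝ | ∃ i, S = Set.Ico (c i) (d i)}).comap
        (ξ^[n])) μ := by
    refine ProbabilityTheory.iIndepSets.iIndep ?_ π ?_ ?_ ?_
    · intro n
      exact le_trans (MeasurableSpace.comap_mono hGle) (hmeas.iterate n).comap_le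
    · intro n S hS T hT hST
      obtain ⟨S', ⟨i, rfl⟩, rfl⟩ := hS
      obtain ⟨T', ⟨j, rfl⟩, rfl⟩ := hT
      obtain ⟨x, hxS, hxT⟩ := hST
      have hij : i = j := by
        by_contra hne
        exact Set.disjoint_left.mp (hdisj hne) hxS hxT
      subst hij
      rw [Set.inter_self]
      exact ⟨_, ⟨i, rfl⟩, rfl⟩
    · intro n
      rw [hπdef, MeasurableSpace.comap_generateFrom]
    · rw [ProbabilityTheory.iIndepSets_iff]
      intro s f H
      have Hc : ∀ n ∈ s, ∃ i, f n = ξ^[n] ⁻¹' Set.Ico (c i) (d i) := by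
        intro n hn
        obtain ⟨S, ⟨i, rfl⟩, h⟩ := H n hn
        exact ⟨i, h.symm⟩
      choose! idx hidx using Hc
      set B : ℕ → Set ℝ := fun n =>
        if n ∈ s then Set.Ico (c (idx n)) (d (idx n)) else Set.Ico (0 : ℝ) 1 with hBdef
      have hB : ∀ j, (∃ i, B j = Set.Ico (c i) (d i)) ∨ B j = Set.Ico (0 : ℝ) 1 := by
        intro j
        by_cases hj : j ∈ s
        · exact Or.inl ⟨idx j, by simp [hBdef, hj]⟩
        · exact Or.inr (by simp [hBdef, hj])
      have hBm : ∀ j, MeasurableSet (B j) := by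
        intro j
        rcases hB j with ⟨i, hi⟩ | h
        · rw [hi]; exact measurableSet_Ico
        · rw [h]; exact measurableSet_Ico
      have hfB : ∀ n ∈ s, f n = ξ^[n] ⁻¹' B n := by
        intro n hn
        rw [hBdef]
        simpa [hn] using hidx n hn
      set k := s.sup id + 1 with hk
      have hns : ∀ n ∈ s, n < k := fun n hn =>
        Nat.lt_succ_of_le (Finset.le_sup (f := id) hn)
      have hfmeas : ∀ n ∈ s, MeasurableSet (f n) := by
        intro n hn
        rw [hfB n hn]
        exact (hmeas.iterate n) (hBm n)
      have hkey : Set.Ico (0 : ℝ) 1 ∩ ⋂ n ∈ s, f n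
          = Set.Ico (0 : ℝ) 1 ∩ ⋂ j ∈ Finset.range k, ξ^[j] ⁻¹' B j := by
        ext x
        simp only [mem_inter_iff, mem_iInter, Finset.mem_range, mem_preimage]
        constructor
        · rintro ⟨hx01, hf⟩
          refine ⟨hx01, fun j hjk => ?_⟩
          by_cases hj : j ∈ s
          · have := hf j hj
            rw [hfB j hj] at this
            exact this
          · simp only [hBdef, if_neg hj]
            exact aux_iter c d hcd hcover ξ hξ j x hx01
        · rintro ⟨hx01, hj⟩
          refine ⟨hx01, fun n hn => ?_⟩
          rw [hfB n hn]
          exact hj n (hns n hn)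
      have LHS : μ (⋂ n ∈ s, f n) = volume (Set.Ico (0 : ℝ) 1 ∩ ⋂ n ∈ s, f n) := by
        rw [hμdef, Measure.restrict_apply (Finset.measurableSet_biInter s hfmeas),
          inter_comm]
      rw [LHS, hkey, aux_main c d hcd hdisj hcover ξ hmeas hξ k B hB]
      have hμf : ∀ n ∈ s, μ (f n) = volume (B n) := by
        intro n hn
        rw [hμdef, Measure.restrict_apply (hfmeas n hn), inter_comm, hfB n hn]
        exact aux_single c d hcd hdisj hcover ξ hmeas hξ n (B n) (hB n)
      rw [Finset.prod_congr rfl hμf]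
      refine (Finset.prod_subset (fun n hn => Finset.mem_range.2 (hns n hn)) ?_).symm
      intro x _ hxs
      simp [hBdef, hxs, Real.volume_Ico]
  -- conclude
  rw [ProbabilityTheory.iIndepFun_iff_iIndep]
  rw [ProbabilityTheory.iIndep_iff] at hind ⊢
  intro s f' H
  refine hind s (fun n hn => ?_)
  have h1 : MeasurableSpace.comap (fun x => φ n (ξ^[n] x)) Real.measurableSpace
      ≤ (MeasurableSpace.generateFrom {S : Set ℝ | ∃ i, S = Set.Ico (c i) (d i)}).comap
        (ξ^[n]) := by
    have heq : (fun x => φ n (ξ^[n] x)) = (φ n) ∘ (ξ^[n]) := rfl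
    rw [heq, ← MeasurableSpace.comap_comp]
    exact MeasurableSpace.comap_mono ((hφ n).comap_le)
  exact h1 _ (H n hn)
end

section
/- For the doubling map τ(x) = 2x mod 1 and digits a_n = χ ∘ τ^{n-1} with χ(x) = ⌊1/x⌋: if x ∈ [0,1) has no finite binary expansion and a_i(x) = r ≥ 2, then for all natural numbers j ≤ ⌊log₂ r⌋ one has a_{i+j}(x) = ⌊r/2^j⌋. -/
open MeasureTheory Set

/-- The doubling map `τ(x) = 2x mod 1`. -/
noncomputable def tau (x : ℝ) : ℝ := Int.fract (2 * x)

/-- `x` has a finite binary expansion. -/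
def FiniteBinary (x : ℝ) : Prop := ∃ k n : ℕ, x = (k : ℝ) / 2 ^ n

lemma tau_mem_Ico (x : ℝ) : tau x ∈ Set.Ico (0 : ℝ) 1 :=
  ⟨Int.fract_nonneg _, Int.fract_lt_one _⟩

lemma notFB_tau {x : ℝ} (hx : x ∈ Set.Ico (0 : ℝ) 1) (h : ¬ FiniteBinary x) :
    ¬ FiniteBinary (tau x) := by
  rintro ⟨k, n, hk⟩
  apply h
  have hm : ⌊2 * x⌋ = 0 ∨ ⌊2 * x⌋ = 1 := by
    rcases hx with ⟨h0, h1⟩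
    have : (0:ℤ) ≤ ⌊2*x⌋ := by positivity
    have h2 : ⌊2*x⌋ < 2 := by
      have : (2:ℝ)*x < 2 := by linarith
      exact_mod_cast Int.floor_lt.2 (by exact_mod_cast this)
    omega
  have hx2 : 2 * x = (k : ℝ) / 2 ^ n + (⌊2*x⌋ : ℝ) := by
    have := Int.fract_add_floor (2*x)
    rw [tau] at hk
    linarith [Int.fract_add_floor (2*x), hk]
  rcases hm with hm | hm
  · refine ⟨k, n+1, ?_⟩
    rw [hm] at hx2
    push_cast at hx2 ⊢
    rw [pow_succ]
    field_simp at hx2 ⊢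
    linarith
  · refine ⟨k + 2^n, n+1, ?_⟩
    rw [hm] at hx2
    push_cast at hx2 ⊢
    rw [pow_succ]
    field_simp at hx2 ⊢
    linarith

lemma iter_facts (x : ℝ) (hx : x ∈ Set.Ico (0 : ℝ) 1) (h : ¬ FiniteBinary x) (n : ℕ) :
    tau^[n] x ∈ Set.Ico (0 : ℝ) 1 ∧ ¬ FiniteBinary (tau^[n] x) := by
  induction n with
  | zero => exact ⟨hx, h⟩
  | succ n ih =>
    rw [Function.iterate_succ_apply']
    exact ⟨tau_mem_Ico _, notFB_tau ih.1 ih.2⟩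

/-- For the doubling map digits `a_n = χ ∘ τ^{n-1}` with `χ(x) = ⌊1/x⌋`: if `x ∈ [0,1)` has no
finite binary expansion and `a_{i+1}(x) = r ≥ 2`, then for all `j ≤ ⌊log₂ r⌋` one has
`a_{i+1+j}(x) = ⌊r/2^j⌋`. -/
theorem stmt5 (x : ℝ) (hx : x ∈ Set.Ico (0 : ℝ) 1) (hΩ : ¬ FiniteBinary x)
    (i : ℕ) (r : ℕ) (hr : 2 ≤ r) (hai : ⌊1 / tau^[i] x⌋ = (r : ℤ)) :
    ∀ j : ℕ, j ≤ Nat.log 2 r → ⌊1 / tau^[i + j] x⌋ = ((r / 2 ^ j : ℕ) : ℤ) := by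
  set y := tau^[i] x with hy
  obtain ⟨hyIco, hyFB⟩ := iter_facts x hx hΩ i
  have hy0 : 0 < y := by
    rcases lt_or_eq_of_le hyIco.1 with h | h
    · exact h
    · exact absurd ⟨0, 0, by simp [← h]⟩ hyFB
  have hfl := Int.floor_eq_iff.mp hai
  have hrle : (r : ℝ) ≤ 1 / y := by exact_mod_cast hfl.1
  have hrlt : 1 / y < (r : ℝ) + 1 := by exact_mod_cast hfl.2
  -- tau^[j] y = 2^j * y for 2^j ≤ r
  have key : ∀ j : ℕ, 2 ^ j ≤ r → tau^[j] y = 2 ^ j * y ∧ 2 ^ j * y < 1 := by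
    intro j hj
    induction j with
    | zero =>
      constructor
      · simp
      · simpa using hyIco.2
    | succ j ih =>
      have h2j : 2 ^ j ≤ r := le_trans (by rw [pow_succ]; omega) hj
      obtain ⟨ih1, ih2⟩ := ih h2j
      have hle : 2 ^ (j+1) * y ≤ 1 := by
        have hyr : y ≤ 1 / (r : ℝ) := by
          rw [le_div_iff₀ (by positivity : (0:ℝ) < (r:ℝ))]
          calc y * r ≤ y * (1/y) := by
                apply mul_le_mul_of_nonneg_left _ hy0.le
                exact hrle
            _ = 1 := by field_simp
        have : (2:ℝ) ^ (j+1) ≤ (r : ℝ) := by exact_mod_cast hj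
        calc 2 ^ (j+1) * y ≤ (r : ℝ) * (1 / (r:ℝ)) := by
              apply mul_le_mul this hyr hy0.le (by positivity)
          _ = 1 := by field_simp
      have hne : 2 ^ (j+1) * y ≠ 1 := by
        intro heq
        apply hyFB
        exact ⟨1, j+1, by push_cast; field_simp; linarith⟩
      have hlt : 2 ^ (j+1) * y < 1 := lt_of_le_of_ne hle hne
      constructor
      · rw [Function.iterate_succ_apply', ih1, tau, Int.fract_eq_self.2]
        · ring
        constructor
        · positivity
        · calc 2 * (2 ^ j * y) = 2 ^ (j+1) * y := by ring
            _ < 1 := hlt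
      · exact hlt
  intro j hj
  have h2j : 2 ^ j ≤ r := Nat.pow_le_of_le_log (by omega) hj
  obtain ⟨hiter, hlt1⟩ := key j h2j
  have hiter' : tau^[i + j] x = 2 ^ j * y := by
    rw [add_comm, Function.iterate_add_apply, ← hy, hiter]
  rw [hiter']
  set q := r / 2 ^ j with hq
  have hql : q * 2 ^ j ≤ r := Nat.div_mul_le_self r (2^j)
  have hqu : r < (q + 1) * 2 ^ j := by
    exact (Nat.div_lt_iff_lt_mul (by positivity)).1 (Nat.lt_succ_self q)
  have hy2 : 0 < 2 ^ j * y := by positivity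
  rw [Int.floor_eq_iff]
  push_cast
  constructor
  · rw [le_div_iff₀ hy2]
    push_cast
    calc (q:ℝ) * (2 ^ j * y) = ((q * 2^j : ℕ) : ℝ) * y := by push_cast; ring
      _ ≤ (r : ℝ) * y := by
          apply mul_le_mul_of_nonneg_right _ hy0.le
          exact_mod_cast hql
      _ ≤ (1/y) * y := mul_le_mul_of_nonneg_right hrle hy0.le
      _ = 1 := by field_simp
  · rw [div_lt_iff₀ hy2]
    push_cast
    have h1 : (r : ℝ) + 1 ≤ ((q+1) * 2^j : ℕ) := by exact_mod_cast hqu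
    calc (1:ℝ) = (1/y) * y := by field_simp
      _ < ((r:ℝ) + 1) * y := mul_lt_mul_of_pos_right hrlt hy0
      _ ≤ (((q+1) * 2^j : ℕ):ℝ) * y := mul_le_mul_of_nonneg_right h1 hy0.le
      _ = ((q:ℝ) + 1) * (2^j * y) := by push_cast; ring
end

section
/- For the induced digits β_n = χ ∘ τ_B^{n-1} of the doubling map, for every ψ ∈ Ψ, Lebesgue-almost surely only finitely many n satisfy the event that some i ≤ n has β_i ≥ n·ψ(⌊log n⌋). -/
open MeasureTheory Set
open scoped ENNReal

/-- The first exit time to `B = [1/2,1)`, plus one. -/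
noncomputable def phi (x : ℝ) : ℕ := sInf {n : ℕ | tau^[n] x ∈ Set.Ico (1 / 2 : ℝ) 1} + 1

/-- The jump transformation `τ_B(x) = τ^{φ(x)}(x)`. -/
noncomputable def tauB (x : ℝ) : ℝ := tau^[phi x] x

lemma tau_iterate (x : ℝ) (hx : x ∈ Set.Ico (0:ℝ) 1) (n : ℕ) :
    tau^[n] x = Int.fract (2 ^ n * x) := by
  induction n with
  | zero => simp [Int.fract_eq_self.2 ⟨hx.1, hx.2⟩]
  | succ n ih =>
    rw [Function.iterate_succ_apply', ih]
    show Int.fract (2 * Int.fract (2 ^ n * x)) = _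
    have h1 : (2:ℝ) * Int.fract (2 ^ n * x)
        = 2 ^ (n+1) * x - ((2 * ⌊2 ^ n * x⌋ : ℤ) : ℝ) := by
      rw [Int.fract]; push_cast; ring
    rw [h1, Int.fract_sub_intCast]

lemma tauB_branch (k : ℕ) (x : ℝ) (h1 : ((2:ℝ)^(k+1))⁻¹ ≤ x) (h2 : x < ((2:ℝ)^k)⁻¹) :
    tauB x = 2^(k+1) * x - 1 := by
  have hpk : (0:ℝ) < 2 ^ k := by positivity
  have hpk1 : (0:ℝ) < 2 ^ (k+1) := by positivity
  have hx0 : 0 < x := lt_of_lt_of_le (by positivity) h1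
  have hx1 : x < 1 := lt_of_lt_of_le h2 (inv_le_one_of_one_le₀ (one_le_pow₀ (by norm_num)))
  have hx : x ∈ Set.Ico (0:ℝ) 1 := ⟨hx0.le, hx1⟩
  have hiter := tau_iterate x hx
  have hku : 2 ^ k * x < 1 := by
    calc (2:ℝ) ^ k * x < 2 ^ k * (2 ^ k)⁻¹ := by
          exact mul_lt_mul_of_pos_left h2 hpk
      _ = 1 := mul_inv_cancel₀ hpk.ne'
  have hkl : (1:ℝ)/2 ≤ 2 ^ k * x := by
    have : (2:ℝ) ^ k * ((2:ℝ)^(k+1))⁻¹ = 1/2 := by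
      rw [pow_succ]; field_simp
    calc (1:ℝ)/2 = 2 ^ k * ((2:ℝ)^(k+1))⁻¹ := this.symm
      _ ≤ 2 ^ k * x := mul_le_mul_of_nonneg_left h1 hpk.le
  have hkmem : tau^[k] x ∈ Set.Ico (1/2 : ℝ) 1 := by
    rw [hiter k, Int.fract_eq_self.2 ⟨by linarith, hku⟩]
    exact ⟨hkl, hku⟩
  have hnot : ∀ n < k, tau^[n] x ∉ Set.Ico (1/2 : ℝ) 1 := by
    intro n hn
    have hpn : (0:ℝ) < 2 ^ n := by positivity
    have hlt : (2:ℝ) ^ n * x < 1/2 := by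
      have h2n : (2:ℝ) ^ (n+1) ≤ 2 ^ k := pow_le_pow_right₀ (by norm_num) hn
      have : (2:ℝ) ^ n * x < 2 ^ n * (2 ^ k)⁻¹ := mul_lt_mul_of_pos_left h2 hpn
      have h3 : (2:ℝ) ^ n * (2 ^ k)⁻¹ ≤ 1/2 := by
        rw [mul_inv_le_iff₀ hpk]
        have hps : (2:ℝ)^(n+1) = 2^n * 2 := pow_succ 2 n
        linarith
      linarith
    rw [hiter n, Int.fract_eq_self.2 ⟨by positivity, by linarith⟩]
    intro hmem
    linarith [hmem.1]
  have hsinf : sInf {n : ℕ | tau^[n] x ∈ Set.Ico (1/2 : ℝ) 1} = k := by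
    refine le_antisymm (Nat.sInf_le hkmem) ?_
    by_contra h
    push_neg at h
    have hne : {n : ℕ | tau^[n] x ∈ Set.Ico (1/2 : ℝ) 1}.Nonempty := ⟨k, hkmem⟩
    exact hnot _ h (Nat.sInf_mem hne)
  have hphi : phi x = k + 1 := by rw [phi, hsinf]
  rw [tauB, hphi, hiter (k+1)]
  have hl1 : (1:ℝ) ≤ 2 ^ (k+1) * x := by
    calc (1:ℝ) = 2^(k+1) * ((2:ℝ)^(k+1))⁻¹ := (mul_inv_cancel₀ hpk1.ne').symm
      _ ≤ 2^(k+1) * x := mul_le_mul_of_nonneg_left h1 hpk1.le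
  have hl2 : 2 ^ (k+1) * x < 2 := by
    have : (2:ℝ)^(k+1) * (2^k)⁻¹ = 2 := by rw [pow_succ]; field_simp
    calc (2:ℝ)^(k+1) * x < 2^(k+1) * (2^k)⁻¹ := mul_lt_mul_of_pos_left h2 hpk1
      _ = 2 := this
  have hfl : ⌊(2:ℝ) ^ (k+1) * x⌋ = 1 := by
    rw [Int.floor_eq_iff]
    constructor <;> push_cast <;> linarith
  rw [Int.fract, hfl]
  norm_num

lemma exists_branch (x : ℝ) (h0 : 0 < x) (h1 : x < 1) :
    ∃ k : ℕ, ((2:ℝ)^(k+1))⁻¹ ≤ x ∧ x < ((2:ℝ)^k)⁻¹ := by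
  have hinv : 1 < x⁻¹ := (one_lt_inv₀ h0).2 h1
  have hex : ∃ k : ℕ, x⁻¹ ≤ 2 ^ (k+1) := by
    obtain ⟨n, hn⟩ := pow_unbounded_of_one_lt x⁻¹ (one_lt_two (α := ℝ))
    exact ⟨n, hn.le.trans (pow_le_pow_right₀ (by norm_num) (Nat.le_succ n))⟩
  refine ⟨Nat.find hex, ?_, ?_⟩
  · have h := Nat.find_spec hex
    have hpk : (0:ℝ) < 2 ^ (Nat.find hex + 1) := by positivity
    rw [inv_le_comm₀ hpk h0]
    exact h
  · have h : (2:ℝ) ^ (Nat.find hex) < x⁻¹ := by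
      rcases Nat.eq_zero_or_pos (Nat.find hex) with h0' | h0'
      · rw [h0']; simpa using hinv
      · have := Nat.find_min hex (Nat.sub_lt h0' one_pos)
        push_neg at this
        have heq : Nat.find hex - 1 + 1 = Nat.find hex := by omega
        rwa [heq] at this
    have hpk : (0:ℝ) < 2 ^ (Nat.find hex) := by positivity
    rwa [lt_inv_comm₀ hpk h0] at h

lemma tauB_zero : tauB 0 = 0 := by
  have h : tau 0 = 0 := by simp [tau]
  rw [tauB, Function.iterate_fixed h]

lemma tauB_mem {x : ℝ} (hx : x ∈ Set.Ico (0:ℝ) 1) : tauB x ∈ Set.Ico (0:ℝ) 1 := by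
  rcases eq_or_lt_of_le hx.1 with h0 | h0
  · rw [← h0, tauB_zero]; exact ⟨le_refl _, one_pos⟩
  · obtain ⟨k, hk1, hk2⟩ := exists_branch x h0 hx.2
    rw [tauB_branch k x hk1 hk2]
    have hpk : (0:ℝ) < 2 ^ k := by positivity
    have hpk1 : (0:ℝ) < 2 ^ (k+1) := by positivity
    constructor
    · have : (1:ℝ) = 2^(k+1) * ((2:ℝ)^(k+1))⁻¹ := (mul_inv_cancel₀ hpk1.ne').symm
      have h2 := mul_le_mul_of_nonneg_left hk1 hpk1.le
      linarith
    · have h3 : (2:ℝ)^(k+1) * (2^k)⁻¹ = 2 := by rw [pow_succ]; field_simp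
      have h2 := mul_lt_mul_of_pos_left hk2 hpk1
      linarith

lemma tauB_iter_mem {x : ℝ} (hx : x ∈ Set.Ico (0:ℝ) 1) (j : ℕ) :
    tauB^[j] x ∈ Set.Ico (0:ℝ) 1 := by
  induction j with
  | zero => exact hx
  | succ j ih => rw [Function.iterate_succ_apply']; exact tauB_mem ih

lemma tauB_step (S : Set ℝ) :
    volume {x | x ∈ Set.Ico (0:ℝ) 1 ∧ tauB x ∈ S} ≤ volume (S ∩ Set.Ico (0:ℝ) 1) := by
  set T := S ∩ Set.Ico (0:ℝ) 1 with hT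
  have hsub : {x | x ∈ Set.Ico (0:ℝ) 1 ∧ tauB x ∈ S}
      ⊆ {(0:ℝ)} ∪ ⋃ k : ℕ, (fun x : ℝ => 2^(k+1) * x - 1) ⁻¹' T := by
    rintro x ⟨hx, hxS⟩
    rcases eq_or_lt_of_le hx.1 with h0 | h0
    · exact Or.inl (by simp [← h0])
    · refine Or.inr ?_
      obtain ⟨k, hk1, hk2⟩ := exists_branch x h0 hx.2
      refine Set.mem_iUnion.2 ⟨k, ?_⟩
      have hbr := tauB_branch k x hk1 hk2
      have hmem : tauB x ∈ Set.Ico (0:ℝ) 1 := tauB_mem hx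
      simp only [Set.mem_preimage, ← hbr]
      exact ⟨hxS, hmem⟩
  have hpre : ∀ k : ℕ, volume ((fun x : ℝ => 2^(k+1) * x - 1) ⁻¹' T)
      = ENNReal.ofReal (((2:ℝ)^(k+1))⁻¹) * volume T := by
    intro k
    have hpk1 : ((2:ℝ)^(k+1)) ≠ 0 := by positivity
    have hcomp : (fun x : ℝ => 2^(k+1) * x - 1) ⁻¹' T
        = ((2:ℝ)^(k+1) * ·) ⁻¹' (((-1:ℝ) + ·) ⁻¹' T) := by
      ext y; simp [Set.mem_preimage, sub_eq_neg_add]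
    rw [hcomp, Real.volume_preimage_mul_left hpk1, measure_preimage_add]
    congr 1
    rw [abs_of_pos (by positivity)]
  calc volume {x | x ∈ Set.Ico (0:ℝ) 1 ∧ tauB x ∈ S}
      ≤ volume ({(0:ℝ)} ∪ ⋃ k : ℕ, (fun x : ℝ => 2^(k+1) * x - 1) ⁻¹' T) :=
        measure_mono hsub
    _ ≤ volume {(0:ℝ)} + volume (⋃ k : ℕ, (fun x : ℝ => 2^(k+1) * x - 1) ⁻¹' T) :=
        measure_union_le _ _
    _ ≤ 0 + ∑' k : ℕ, volume ((fun x : ℝ => 2^(k+1) * x - 1) ⁻¹' T) := by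
        gcongr
        · exact le_of_eq Real.volume_singleton
        · exact measure_iUnion_le _
    _ = ∑' k : ℕ, ENNReal.ofReal (((2:ℝ)^(k+1))⁻¹) * volume T := by
        rw [zero_add]; exact tsum_congr hpre
    _ = (∑' k : ℕ, ENNReal.ofReal (((2:ℝ)^(k+1))⁻¹)) * volume T :=
        ENNReal.tsum_mul_right
    _ ≤ 1 * volume T := by
        gcongr
        have hq : ∀ k : ℕ, ENNReal.ofReal (((2:ℝ)^(k+1))⁻¹) = (2⁻¹ : ℝ≥0∞)^(k+1) := by
          intro k
          rw [← inv_pow, ENNReal.ofReal_pow (by norm_num)]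
          congr 1
          rw [ENNReal.ofReal_inv_of_pos (by norm_num)]
          norm_num
        rw [tsum_congr hq]
        have : ∑' k : ℕ, (2⁻¹ : ℝ≥0∞)^(k+1) = 2⁻¹ * ∑' k : ℕ, (2⁻¹ : ℝ≥0∞)^k := by
          rw [← ENNReal.tsum_mul_left]
          exact tsum_congr fun k => (pow_succ' _ _)
        rw [this, ENNReal.tsum_geometric, ENNReal.one_sub_inv_two, inv_inv]
        exact le_of_eq (ENNReal.inv_mul_cancel (by norm_num) (by norm_num))
    _ = volume T := one_mul _

lemma tauB_iter_vol (j : ℕ) (S : Set ℝ) :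
    volume {x | x ∈ Set.Ico (0:ℝ) 1 ∧ tauB^[j] x ∈ S} ≤ volume (S ∩ Set.Ico (0:ℝ) 1) := by
  induction j generalizing S with
  | zero =>
      refine le_of_eq (congrArg volume ?_)
      ext x; simp only [Set.mem_setOf_eq, Set.mem_inter_iff, Function.iterate_zero_apply]; tauto
  | succ j ih =>
      have hsub : {x | x ∈ Set.Ico (0:ℝ) 1 ∧ tauB^[j+1] x ∈ S}
          ⊆ {x | x ∈ Set.Ico (0:ℝ) 1 ∧ tauB x ∈ {y | y ∈ Set.Ico (0:ℝ) 1 ∧ tauB^[j] y ∈ S}} := by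
        rintro x ⟨hx, hxS⟩
        rw [Function.iterate_succ_apply] at hxS
        exact ⟨hx, tauB_mem hx, hxS⟩
      calc volume _ ≤ volume {x | x ∈ Set.Ico (0:ℝ) 1 ∧
              tauB x ∈ {y | y ∈ Set.Ico (0:ℝ) 1 ∧ tauB^[j] y ∈ S}} := measure_mono hsub
        _ ≤ volume ({y | y ∈ Set.Ico (0:ℝ) 1 ∧ tauB^[j] y ∈ S} ∩ Set.Ico (0:ℝ) 1) :=
            tauB_step _
        _ ≤ volume {y | y ∈ Set.Ico (0:ℝ) 1 ∧ tauB^[j] y ∈ S} :=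
            measure_mono Set.inter_subset_left
        _ ≤ volume (S ∩ Set.Ico (0:ℝ) 1) := ih S

lemma tauB_small_vol (j : ℕ) (ε : ℝ) (hε : 0 ≤ ε) :
    volume {x | x ∈ Set.Ico (0:ℝ) 1 ∧ tauB^[j] x ≤ ε} ≤ ENNReal.ofReal ε := by
  have h := tauB_iter_vol j (Set.Iic ε)
  have heq : {x | x ∈ Set.Ico (0:ℝ) 1 ∧ tauB^[j] x ≤ ε}
      = {x | x ∈ Set.Ico (0:ℝ) 1 ∧ tauB^[j] x ∈ Set.Iic ε} := rfl
  rw [heq]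
  refine h.trans ?_
  calc volume (Set.Iic ε ∩ Set.Ico (0:ℝ) 1) ≤ volume (Set.Icc (0:ℝ) ε) := by
        apply measure_mono
        rintro y ⟨hy1, hy2⟩
        exact ⟨hy2.1, hy1⟩
    _ = ENNReal.ofReal ε := by rw [Real.volume_Icc, sub_zero]

/-- For the induced digits `β_i = χ ∘ τ_B^{i-1}` (`χ(x) = ⌊1/x⌋`): for every `ψ` with
`∑ 1/ψ(n) < ∞`, Lebesgue-almost surely only finitely many `n` admit some `i ≤ n` with
`β_i ≥ n·ψ(⌊log n⌋)`. -/
theorem stmt9 (ψ : ℕ → ℝ) (hψpos : ∀ n, 0 < ψ n) (hψ : Summable (fun n => 1 / ψ n)) :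
    volume {x : ℝ | x ∈ Set.Ico (0 : ℝ) 1 ∧
      {n : ℕ | ∃ i ∈ Finset.Icc 1 n,
        (n : ℝ) * ψ ⌊Real.log n⌋₊ ≤ (⌊1 / tauB^[i - 1] x⌋ : ℝ)}.Infinite} = 0 := by
  classical
  set K : ℕ → ℕ := fun m => ⌈Real.exp ((m:ℝ)+1)⌉₊ + 1 with hK
  set ε : ℕ → ℝ := fun m => (Real.exp m * ψ m)⁻¹ with hEps
  set G : ℕ → Set ℝ := fun m => {x | x ∈ Set.Ico (0:ℝ) 1 ∧ ∃ i < K m, tauB^[i] x ≤ ε m} with hG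
  have hεpos : ∀ m, 0 < ε m := fun m => inv_pos.2 (mul_pos (Real.exp_pos _) (hψpos m))
  -- volume of G m
  have hGvol : ∀ m, volume (G m) ≤ (K m : ℝ≥0∞) * ENNReal.ofReal (ε m) := by
    intro m
    have hsub : G m ⊆ ⋃ i ∈ Finset.range (K m),
        {x | x ∈ Set.Ico (0:ℝ) 1 ∧ tauB^[i] x ≤ ε m} := by
      rintro x ⟨hx, i, hi, hle⟩
      exact Set.mem_biUnion (Finset.mem_range.2 hi) ⟨hx, hle⟩
    calc volume (G m)
        ≤ ∑ i ∈ Finset.range (K m), volume {x | x ∈ Set.Ico (0:ℝ) 1 ∧ tauB^[i] x ≤ ε m} :=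
          (measure_mono hsub).trans (measure_biUnion_finset_le _ _)
      _ ≤ ∑ _i ∈ Finset.range (K m), ENNReal.ofReal (ε m) :=
          Finset.sum_le_sum fun i _ => tauB_small_vol i (ε m) (hεpos m).le
      _ = (K m : ℝ≥0∞) * ENNReal.ofReal (ε m) := by
          rw [Finset.sum_const, Finset.card_range, nsmul_eq_mul]
  -- summability
  have hsum : ∑' m, volume (G m) ≠ ⊤ := by
    have hle : ∀ m, volume (G m) ≤ ENNReal.ofReal ((Real.exp 1 + 2) * (1/ψ m)) := by
      intro m
      refine (hGvol m).trans ?_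
      rw [← ENNReal.ofReal_natCast (K m), ← ENNReal.ofReal_mul (Nat.cast_nonneg _)]
      apply ENNReal.ofReal_le_ofReal
      have hKle : (K m : ℝ) ≤ Real.exp ((m:ℝ)+1) + 2 := by
        have h1 : (⌈Real.exp ((m:ℝ)+1)⌉₊ : ℝ) < Real.exp ((m:ℝ)+1) + 1 :=
          Nat.ceil_lt_add_one (Real.exp_pos _).le
        have h2 : (K m : ℝ) = (⌈Real.exp ((m:ℝ)+1)⌉₊ : ℝ) + 1 := by
          simp [hK]
        linarith
      have hψm := hψpos m
      have hexp : (1:ℝ) ≤ Real.exp m := Real.one_le_exp (Nat.cast_nonneg m)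
      have hexp1 : Real.exp ((m:ℝ)+1) = Real.exp 1 * Real.exp m := by
        rw [← Real.exp_add]; ring_nf
      have hrw : (Real.exp 1 + 2) * (1/ψ m)
          = ((Real.exp 1 + 2) * Real.exp m) * (Real.exp m * ψ m)⁻¹ := by
        field_simp
      have hKle2 : (K m : ℝ) ≤ (Real.exp 1 + 2) * Real.exp m := by
        have he1 : (0:ℝ) < Real.exp 1 := Real.exp_pos 1
        nlinarith
      calc (K m : ℝ) * ε m ≤ ((Real.exp 1 + 2) * Real.exp m) * ε m := by
            apply mul_le_mul_of_nonneg_right hKle2 (hεpos m).le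
        _ = (Real.exp 1 + 2) * (1/ψ m) := by rw [hrw]
    refine ne_top_of_le_ne_top ?_ (ENNReal.tsum_le_tsum hle)
    have hs2 : Summable (fun m => (Real.exp 1 + 2) * (1/ψ m)) := hψ.mul_left _
    rw [← ENNReal.ofReal_tsum_of_nonneg
      (fun m => mul_nonneg (by positivity) (one_div_nonneg.2 (hψpos m).le)) hs2]
    exact ENNReal.ofReal_ne_top
  -- n is always < K ⌊log n⌋₊
  have hnK : ∀ n : ℕ, n < K ⌊Real.log n⌋₊ := by
    intro n
    rcases Nat.eq_zero_or_pos n with h0 | h0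
    · subst h0; simp [hK]
    · have hnpos : (0:ℝ) < n := by exact_mod_cast h0
      have hlog : Real.log n < (⌊Real.log n⌋₊ : ℝ) + 1 := Nat.lt_floor_add_one _
      have hlt : (n:ℝ) < Real.exp ((⌊Real.log n⌋₊:ℝ)+1) := by
        calc (n:ℝ) = Real.exp (Real.log n) := (Real.exp_log hnpos).symm
          _ < _ := Real.exp_lt_exp.2 hlog
      have := Nat.lt_ceil.2 hlt
      simp only [hK]
      omega
  -- Borel-Cantelli
  refine measure_mono_null ?_ (measure_limsup_atTop_eq_zero hsum)
  rintro x ⟨hx, hinf⟩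
  rw [Filter.mem_limsup_iff_frequently_mem, Nat.frequently_atTop_iff_infinite]
  set N := {n : ℕ | ∃ i ∈ Finset.Icc 1 n,
    (n : ℝ) * ψ ⌊Real.log n⌋₊ ≤ (⌊1 / tauB^[i - 1] x⌋ : ℝ)} with hN
  have hmemG : ∀ n ∈ N, x ∈ G ⌊Real.log n⌋₊ := by
    intro n hn
    obtain ⟨i, hi, hle⟩ := hn
    rw [Finset.mem_Icc] at hi
    have hn1 : 1 ≤ n := le_trans hi.1 hi.2
    set m := ⌊Real.log n⌋₊ with hm
    set y := tauB^[i-1] x with hy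
    have hymem : y ∈ Set.Ico (0:ℝ) 1 := tauB_iter_mem hx _
    have hψm := hψpos m
    have hnpos : (0:ℝ) < n := by exact_mod_cast hn1
    have hprod : 0 < (n:ℝ) * ψ m := mul_pos hnpos hψm
    have hy0 : 0 < y := by
      rcases eq_or_lt_of_le hymem.1 with h | h
      · exfalso
        rw [← h] at hle
        norm_num at hle
        linarith
      · exact h
    have hfl : (⌊1 / y⌋ : ℝ) ≤ 1 / y := Int.floor_le _
    have hle2 : (n:ℝ) * ψ m ≤ 1 / y := le_trans hle hfl
    have hloglb : Real.exp m ≤ (n:ℝ) := by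
      have h1 : (m:ℝ) ≤ Real.log n :=
        Nat.floor_le (Real.log_nonneg (by exact_mod_cast hn1))
      calc Real.exp (m:ℝ) ≤ Real.exp (Real.log n) := Real.exp_le_exp.2 h1
        _ = n := Real.exp_log hnpos
    have hyle : y ≤ ε m := by
      have h2 : y ≤ ((n:ℝ) * ψ m)⁻¹ := by
        rw [show ((n:ℝ) * ψ m)⁻¹ = 1/((n:ℝ) * ψ m) from (one_div _).symm,
          le_div_iff₀ hprod]
        calc y * ((n:ℝ) * ψ m) ≤ y * (1/y) := by
              apply mul_le_mul_of_nonneg_left hle2 hy0.le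
          _ = 1 := by field_simp
      refine h2.trans ?_
      have : Real.exp m * ψ m ≤ (n:ℝ) * ψ m :=
        mul_le_mul_of_nonneg_right hloglb hψm.le
      exact inv_anti₀ (mul_pos (Real.exp_pos _) hψm) this
    have hiK : i - 1 < K m := by
      have := hnK n
      rw [← hm] at this
      omega
    exact ⟨hx, i - 1, hiK, hyle⟩
  have himgsub : (fun n : ℕ => ⌊Real.log n⌋₊) '' N ⊆ {m | x ∈ G m} := by
    rintro m ⟨n, hn, rfl⟩
    exact hmemG n hn
  have himg : ((fun n : ℕ => ⌊Real.log n⌋₊) '' N).Infinite := by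
    intro hfin
    apply hinf
    have hsub2 : N ⊆ ⋃ m ∈ ((fun n : ℕ => ⌊Real.log n⌋₊) '' N), {n : ℕ | n < K m} := by
      intro n hn
      exact Set.mem_biUnion (Set.mem_image_of_mem _ hn) (hnK n)
    exact (Set.Finite.biUnion hfin (fun m _ => Set.finite_Iio (K m))).subset hsub2
  exact himg.mono himgsub
end

section
/- For every ε > 0 there exist M ∈ ℕ and R > 0 such that for all m ≥ M and r ≥ R, the piecewise constant function v_m^r on [0,1) (taking value y_{min{j,⌊log₂ r⌋}, i} = 2^{min{j,⌊log₂ r⌋}+m+1}/(2^m - i - 1) on J_{j,i}^m = [1/2^j - (i+1)/2^{j+m}, 1/2^j - i/2^{j+m})) satisfies E(v_m^r) = 2(⌊log₂ r⌋ + 2)·∑_{i=0}^{2^{m-1}-1} 1/(2^m - i - 1) ≤ (2+ε)·log r. -/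
set_option maxHeartbeats 1000000

open MeasureTheory Set

/-- The cell `J_{j,i}^m`. -/
def stmt13J (m j i : ℕ) : Set ℝ :=
  Set.Ico ((1 : ℝ) / 2 ^ j - (i + 1) / 2 ^ (j + m)) ((1 : ℝ) / 2 ^ j - i / 2 ^ (j + m))

lemma stmt13J_subset_band {m : ℕ} (hm : 1 ≤ m) (j : ℕ) {i : ℕ} (hi : i < 2 ^ (m - 1)) :
    stmt13J m j i ⊆ Set.Ico ((1 : ℝ) / 2 ^ (j + 1)) ((1 : ℝ) / 2 ^ j) := by
  apply Set.Ico_subset_Ico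
  · have h1 : ((i : ℝ) + 1) ≤ 2 ^ (m - 1) := by
      have : (i : ℝ) + 1 ≤ ((2 ^ (m - 1) : ℕ) : ℝ) := by exact_mod_cast hi
      simpa using this
    have hsplit : j + m = (j + 1) + (m - 1) := by omega
    have h2 : ((i : ℝ) + 1) / 2 ^ (j + m) ≤ (1 : ℝ) / 2 ^ (j + 1) := by
      rw [hsplit, pow_add]
      rw [div_le_div_iff₀ (by positivity) (by positivity), pow_add]
      nlinarith [mul_le_mul_of_nonneg_right h1 (by positivity : (0:ℝ) ≤ 2 ^ j * (2:ℝ) ^ 1)]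
    have h3 : (1 : ℝ) / 2 ^ (j + 1) + 1 / 2 ^ (j + 1) = 1 / 2 ^ j := by
      rw [pow_succ]; field_simp; ring
    linarith
  · have : (0 : ℝ) ≤ (i : ℝ) / 2 ^ (j + m) := by positivity
    linarith

lemma stmt13_band_subset (j : ℕ) :
    Set.Ico ((1 : ℝ) / 2 ^ (j + 1)) ((1 : ℝ) / 2 ^ j) ⊆ Set.Ioo (0 : ℝ) 1 := by
  intro x hx
  constructor
  · have : (0 : ℝ) < 1 / 2 ^ (j + 1) := by positivity
    linarith [hx.1]
  · have h1 : (1 : ℝ) / 2 ^ j ≤ 1 := by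
      rw [div_le_one (by positivity)]
      exact one_le_pow₀ (by norm_num)
    linarith [hx.2]

/-- covering lemma -/
lemma stmt13_cover {m : ℕ} (hm : 1 ≤ m) {x : ℝ} (hx : x ∈ Set.Ioo (0 : ℝ) 1) :
    ∃ j i : ℕ, i < 2 ^ (m - 1) ∧ x ∈ stmt13J m j i := by
  obtain ⟨hx0, hx1⟩ := hx
  have hex : ∃ n : ℕ, (1 : ℝ) / 2 ^ (n + 1) ≤ x := by
    obtain ⟨n, hn⟩ := pow_unbounded_of_one_lt (1 / x) (one_lt_two (α := ℝ))
    refine ⟨n, ?_⟩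
    have h1 : (1 : ℝ) / 2 ^ n ≤ x := by
      rw [div_le_iff₀ (by positivity)]
      rw [div_lt_iff₀ hx0] at hn
      nlinarith [pow_pos (by norm_num : (0:ℝ) < 2) n]
    have : (1 : ℝ) / 2 ^ (n + 1) ≤ 1 / 2 ^ n := by
      apply div_le_div_of_nonneg_left one_pos.le (by positivity)
      exact pow_le_pow_right₀ (by norm_num) (by omega)
    linarith
  set j := Nat.find hex with hj
  have hj1 : (1 : ℝ) / 2 ^ (j + 1) ≤ x := Nat.find_spec hex
  have hj2 : x < (1 : ℝ) / 2 ^ j := by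
    rcases Nat.eq_zero_or_pos j with h0 | hpos
    · rw [h0]; simpa using hx1
    · have := Nat.find_min hex (m := j - 1) (by omega)
      push_neg at this
      have hrw : j - 1 + 1 = j := by omega
      rwa [hrw] at this
  -- now find i
  set t : ℝ := ((1 : ℝ) / 2 ^ j - x) * 2 ^ (j + m) with ht
  have hpow : (0 : ℝ) < 2 ^ (j + m) := by positivity
  have ht0 : 0 < t := by
    apply mul_pos _ hpow
    linarith
  have htN : t ≤ 2 ^ (m - 1) := by
    have h3 : (1 : ℝ) / 2 ^ (j + 1) + 1 / 2 ^ (j + 1) = 1 / 2 ^ j := by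
      rw [pow_succ]; field_simp; ring
    have hsub : (1 : ℝ) / 2 ^ j - x ≤ 1 / 2 ^ (j + 1) := by linarith
    have hsplit : j + m = (j + 1) + (m - 1) := by omega
    calc t ≤ (1 / 2 ^ (j + 1)) * 2 ^ (j + m) := by
          apply mul_le_mul_of_nonneg_right hsub hpow.le
      _ = 2 ^ (m - 1) := by
          rw [hsplit, pow_add, pow_succ]
          field_simp
          ring
  have hceil : 1 ≤ ⌈t⌉₊ := Nat.one_le_ceil_iff.mpr ht0
  refine ⟨j, ⌈t⌉₊ - 1, ?_, ?_, ?_⟩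
  · have : ⌈t⌉₊ ≤ 2 ^ (m - 1) := by
      rw [Nat.ceil_le]
      exact_mod_cast htN
    omega
  · -- lower bound : 1/2^j - (i+1)/2^(j+m) ≤ x  ⟺  t ≤ i+1
    have hcast : ((⌈t⌉₊ - 1 : ℕ) : ℝ) + 1 = (⌈t⌉₊ : ℝ) := by
      have : ((⌈t⌉₊ - 1 : ℕ) : ℝ) = (⌈t⌉₊ : ℝ) - 1 := by
        push_cast [Nat.cast_sub hceil]; ring
      rw [this]; ring
    have hle : t ≤ ((⌈t⌉₊ - 1 : ℕ) : ℝ) + 1 := by rw [hcast]; exact Nat.le_ceil t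
    have : (1 : ℝ) / 2 ^ j - x ≤ (((⌈t⌉₊ - 1 : ℕ) : ℝ) + 1) / 2 ^ (j + m) := by
      rw [le_div_iff₀ hpow]
      exact hle
    linarith
  · -- upper bound : x < 1/2^j - i/2^(j+m)  ⟺  i < t
    have hlt : ((⌈t⌉₊ - 1 : ℕ) : ℝ) < t := by
      have h1 : (⌈t⌉₊ : ℝ) < t + 1 := Nat.ceil_lt_add_one ht0.le
      have : ((⌈t⌉₊ - 1 : ℕ) : ℝ) = (⌈t⌉₊ : ℝ) - 1 := by
        push_cast [Nat.cast_sub hceil]; ring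
      linarith
    have : ((⌈t⌉₊ - 1 : ℕ) : ℝ) / 2 ^ (j + m) < (1 : ℝ) / 2 ^ j - x := by
      rw [div_lt_iff₀ hpow]
      exact hlt
    linarith

lemma stmt13_disjoint {m : ℕ} (hm : 1 ≤ m) :
    Pairwise (Function.onFun Disjoint (fun p : ℕ × Fin (2 ^ (m - 1)) =>
      stmt13J m p.1 (p.2 : ℕ))) := by
  have key : ∀ (j i j' i' : ℕ), i < 2 ^ (m-1) → i' < 2 ^ (m-1) →
      (j < j' ∨ (j = j' ∧ i < i')) → Disjoint (stmt13J m j i) (stmt13J m j' i') := by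
    rintro j i j' i' hi hi' (hlt | ⟨rfl, hii⟩)
    · rw [Set.disjoint_left]
      intro x hx hx'
      have h1 := (stmt13J_subset_band hm j hi hx).1
      have h2 := (stmt13J_subset_band hm j' hi' hx').2
      have : (1 : ℝ) / 2 ^ j' ≤ 1 / 2 ^ (j + 1) := by
        apply div_le_div_of_nonneg_left one_pos.le (by positivity)
        exact pow_le_pow_right₀ (by norm_num) (by omega)
      linarith
    · rw [Set.disjoint_left]
      rintro x ⟨hx1, _⟩ ⟨_, hx4⟩
      have hpow : (0 : ℝ) < 2 ^ (j + m) := by positivity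
      have hcast : (i : ℝ) + 1 ≤ (i' : ℝ) := by exact_mod_cast hii
      have h5 : ((i : ℝ) + 1) / 2 ^ (j + m) ≤ ((i' : ℝ)) / 2 ^ (j + m) := by gcongr
      linarith
  rintro ⟨j, i⟩ ⟨j', i'⟩ hne
  rcases lt_trichotomy j j' with h | h | h
  · exact key j i j' i' i.2 i'.2 (Or.inl h)
  · subst h
    have hii : (i : ℕ) ≠ (i' : ℕ) := by
      intro hc; exact hne (by simp [Prod.ext_iff, Fin.ext_iff, hc])
    rcases hii.lt_or_gt with h | h
    · exact key j i j i' i.2 i'.2 (Or.inr ⟨rfl, h⟩)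
    · exact (key j i' j i i'.2 i.2 (Or.inr ⟨rfl, h⟩)).symm
  · exact (key j' i' j i i'.2 i.2 (Or.inl h)).symm

lemma stmt13_hasSum (L : ℕ) :
    HasSum (fun j : ℕ => (2 : ℝ) ^ (min j L) / 2 ^ j) ((L : ℝ) + 2) := by
  have hsum : ∑ i ∈ Finset.range (L + 1), (2 : ℝ) ^ (min i L) / 2 ^ i = (L : ℝ) + 1 := by
    have hone : ∀ i ∈ Finset.range (L + 1), (2 : ℝ) ^ (min i L) / 2 ^ i = 1 := by
      intro i hi
      simp only [Finset.mem_range] at hi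
      rw [min_eq_left (by omega)]
      exact div_self (by positivity)
    rw [Finset.sum_congr rfl hone, Finset.sum_const, Finset.card_range]
    push_cast; ring
  have hshift : (fun n : ℕ => (2 : ℝ) ^ (min (n + (L + 1)) L) / 2 ^ (n + (L + 1)))
      = fun n : ℕ => 1 / 2 / 2 ^ n := by
    funext n
    rw [min_eq_right (by omega), show n + (L + 1) = L + (n + 1) by omega, pow_add, pow_succ]
    field_simp
  have h1 : HasSum (fun n : ℕ => (2 : ℝ) ^ (min (n + (L + 1)) L) / 2 ^ (n + (L + 1)))
      (((L : ℝ) + 2) - ∑ i ∈ Finset.range (L + 1), (2 : ℝ) ^ (min i L) / 2 ^ i) := by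
    rw [hshift, hsum, show ((L : ℝ) + 2) - ((L : ℝ) + 1) = 1 by ring]
    exact hasSum_geometric_two' 1
  exact (hasSum_nat_add_iff' (L + 1)).1 h1

lemma stmt13_sum_bound {m : ℕ} (hm : 2 ≤ m) :
    ∑ i ∈ Finset.range (2 ^ (m - 1)), 1 / ((2 : ℝ) ^ m - i - 1) ≤ Real.log 2 + 4 / 2 ^ m := by
  have hmsplit : m = (m - 1) + 1 := by omega
  have hpm : (2 : ℝ) ^ m = 2 * 2 ^ (m - 1) := by
    conv_lhs => rw [hmsplit]
    rw [pow_succ]; ring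
  have hp2 : (2 : ℝ) ≤ 2 ^ (m - 1) := by
    calc (2 : ℝ) = 2 ^ 1 := (pow_one 2).symm
    _ ≤ 2 ^ (m - 1) := pow_le_pow_right₀ (by norm_num) (by omega)
  set g : ℕ → ℝ := fun k => -Real.log ((2 : ℝ) ^ m - k - 1) with hg
  have hstep : ∀ i ∈ Finset.range (2 ^ (m - 1)),
      1 / ((2 : ℝ) ^ m - i - 1) ≤ g (i + 1) - g i := by
    intro i hi
    simp only [Finset.mem_range] at hi
    have hcast : (i : ℝ) + 1 ≤ 2 ^ (m - 1) := by
      have : ((i : ℕ) : ℝ) + 1 ≤ ((2 ^ (m - 1) : ℕ) : ℝ) := by exact_mod_cast hi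
      simpa using this
    set x : ℝ := (2 : ℝ) ^ m - i - 1 with hx
    have hx2 : 2 ≤ x := by
      have : (2 : ℝ) ^ (m - 1) ≤ x := by rw [hx, hpm]; linarith
      linarith
    have hgx : g (i + 1) - g i = Real.log x - Real.log (x - 1) := by
      rw [hg]
      simp only
      push_cast
      rw [hx]
      ring_nf
    rw [hgx]
    have hxpos : 0 < x := by linarith
    have hx1pos : 0 < x - 1 := by linarith
    have h := Real.log_le_sub_one_of_pos (show 0 < (x - 1) / x by positivity)
    rw [Real.log_div (by linarith) (by linarith)] at h
    have hfield : (x - 1) / x - 1 = -(1 / x) := by field_simp; ring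
    linarith
  have htel : ∑ i ∈ Finset.range (2 ^ (m - 1)), (g (i + 1) - g i)
      = g (2 ^ (m - 1)) - g 0 := Finset.sum_range_sub g (2 ^ (m - 1))
  have hbound : ∑ i ∈ Finset.range (2 ^ (m - 1)), 1 / ((2 : ℝ) ^ m - i - 1)
      ≤ g (2 ^ (m - 1)) - g 0 := by
    rw [← htel]; exact Finset.sum_le_sum hstep
  have hgN : g (2 ^ (m - 1)) = -Real.log ((2 : ℝ) ^ (m - 1) - 1) := by
    rw [hg]; simp only; push_cast; rw [hpm]; ring_nf
  have hg0 : g 0 = -Real.log ((2 : ℝ) ^ m - 1) := by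
    rw [hg]; simp only; push_cast; ring_nf
  rw [hgN, hg0] at hbound
  -- log (2^m - 1) ≤ m * log 2
  have h1 : Real.log ((2 : ℝ) ^ m - 1) ≤ m * Real.log 2 := by
    rw [← Real.log_pow]
    apply Real.log_le_log (by nlinarith) (by linarith [pow_pos (by norm_num : (0:ℝ) < 2) m])
  -- (m-1) log 2 - log(2^(m-1) - 1) ≤ 1/(2^(m-1)-1)
  have h2 : ((m : ℝ) - 1) * Real.log 2 - Real.log ((2 : ℝ) ^ (m - 1) - 1)
      ≤ 1 / ((2 : ℝ) ^ (m - 1) - 1) := by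
    have hpos : (0 : ℝ) < 2 ^ (m - 1) - 1 := by linarith
    have h := Real.log_le_sub_one_of_pos
      (show 0 < (2 : ℝ) ^ (m - 1) / (2 ^ (m - 1) - 1) by positivity)
    rw [Real.log_div (by positivity) (by linarith)] at h
    have hfield : (2 : ℝ) ^ (m - 1) / (2 ^ (m - 1) - 1) - 1 = 1 / (2 ^ (m - 1) - 1) := by
      field_simp
      ring
    have hlogpow : Real.log ((2 : ℝ) ^ (m - 1)) = ((m : ℝ) - 1) * Real.log 2 := by
      rw [Real.log_pow]
      have : ((m - 1 : ℕ) : ℝ) = (m : ℝ) - 1 := by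
        have : 1 ≤ m := by omega
        push_cast [Nat.cast_sub this]
        ring
      rw [this]
    linarith
  have h3 : 1 / ((2 : ℝ) ^ (m - 1) - 1) ≤ 4 / 2 ^ m := by
    rw [div_le_div_iff₀ (by linarith) (by positivity), hpm]
    nlinarith
  have : (m : ℝ) * Real.log 2 - ((m : ℝ) - 1) * Real.log 2 = Real.log 2 := by ring
  linarith

/-- For every `ε > 0` there exist `M ∈ ℕ` and `R > 0` such that for all `m ≥ M` and `r ≥ R`:
any function `v` on `[0,1)` taking the value
`y_{min{j,⌊log₂ r⌋}, i} = 2^{min{j,⌊log₂ r⌋}+m+1}/(2^m - i - 1)` on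
`J_{j,i}^m = [1/2^j - (i+1)/2^{j+m}, 1/2^j - i/2^{j+m})` satisfies
`E(v) = 2(⌊log₂ r⌋ + 2)·∑_{i=0}^{2^{m-1}-1} 1/(2^m - i - 1) ≤ (2+ε)·log r`. -/
theorem stmt13 (ε : ℝ) (hε : 0 < ε) :
    ∃ M : ℕ, ∃ R : ℝ, 0 < R ∧ ∀ m : ℕ, M ≤ m → ∀ r : ℝ, R ≤ r → ∀ v : ℝ → ℝ,
      (∀ j : ℕ, ∀ i : ℕ, i < 2 ^ (m - 1) →
        ∀ x ∈ Set.Ico ((1 : ℝ) / 2 ^ j - (i + 1) / 2 ^ (j + m))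
            ((1 : ℝ) / 2 ^ j - i / 2 ^ (j + m)),
          v x = 2 ^ (min j (Nat.log 2 ⌊r⌋₊) + m + 1) / ((2 : ℝ) ^ m - i - 1)) →
      (∫ x in Set.Ico (0 : ℝ) 1, v x) =
          2 * ((Nat.log 2 ⌊r⌋₊ : ℝ) + 2) *
            ∑ i ∈ Finset.range (2 ^ (m - 1)), 1 / ((2 : ℝ) ^ m - i - 1) ∧
        (∫ x in Set.Ico (0 : ℝ) 1, v x) ≤ (2 + ε) * Real.log r := by
  obtain ⟨M₀, hM₀⟩ := pow_unbounded_of_one_lt (R := ℝ) (64 / ε) one_lt_two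
  refine ⟨max 2 M₀, Real.exp (1 + 8 / ε), Real.exp_pos _, ?_⟩
  intro m hm r hr v hv
  have hm2 : 2 ≤ m := le_trans (le_max_left _ _) hm
  have hm1 : 1 ≤ m := by omega
  set L : ℕ := Nat.log 2 ⌊r⌋₊ with hL
  set N : ℕ := 2 ^ (m - 1) with hN
  set C : ℝ := ∑ i ∈ Finset.range N, 1 / ((2 : ℝ) ^ m - i - 1) with hC
  -- basic facts about the denominator
  have hpm : (2 : ℝ) ^ m = 2 * 2 ^ (m - 1) := by
    conv_lhs => rw [show m = (m - 1) + 1 by omega]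
    rw [pow_succ]; ring
  have hp2 : (2 : ℝ) ≤ 2 ^ (m - 1) := by
    calc (2 : ℝ) = 2 ^ 1 := (pow_one 2).symm
    _ ≤ 2 ^ (m - 1) := pow_le_pow_right₀ (by norm_num) (by omega)
  have hden : ∀ i : ℕ, i < N → (1 : ℝ) ≤ (2 : ℝ) ^ m - i - 1 := by
    intro i hi
    have hcast : (i : ℝ) + 1 ≤ 2 ^ (m - 1) := by
      have : ((i : ℕ) : ℝ) + 1 ≤ ((2 ^ (m - 1) : ℕ) : ℝ) := by exact_mod_cast hi
      simpa using this
    rw [hpm]; linarith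
  -- the cells
  set JJ : ℕ × Fin N → Set ℝ := fun p => stmt13J m p.1 (p.2 : ℕ) with hJJ
  set c : ℕ → ℕ → ℝ :=
    fun j i => 2 ^ (min j L + m + 1) / ((2 : ℝ) ^ m - i - 1) with hc
  have hvc : ∀ j i : ℕ, i < N → ∀ x ∈ stmt13J m j i, v x = c j i := by
    intro j i hi x hx
    exact hv j i hi x hx
  have hcnn : ∀ j i : ℕ, i < N → 0 ≤ c j i := by
    intro j i hi
    have := hden i hi
    rw [hc]
    positivity
  have hcB : ∀ j i : ℕ, i < N → c j i ≤ 2 ^ (L + m + 1) := by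
    intro j i hi
    have h1 : (2 : ℝ) ^ (min j L + m + 1) ≤ 2 ^ (L + m + 1) :=
      pow_le_pow_right₀ (by norm_num) (by omega)
    have h2 : c j i ≤ 2 ^ (min j L + m + 1) := by
      rw [hc]
      exact div_le_self (by positivity) (hden i hi)
    linarith
  have hJmeas : ∀ p : ℕ × Fin N, MeasurableSet (JJ p) := fun p => measurableSet_Ico
  have hdisj := stmt13_disjoint hm1
  have hcover : (⋃ p : ℕ × Fin N, JJ p) = Set.Ioo (0 : ℝ) 1 := by
    ext x
    simp only [Set.mem_iUnion]
    constructor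
    · rintro ⟨p, hp⟩
      exact stmt13_band_subset p.1 (stmt13J_subset_band hm1 p.1 p.2.2 hp)
    · intro hx
      obtain ⟨j, i, hi, hmem⟩ := stmt13_cover hm1 hx
      exact ⟨(j, ⟨i, hi⟩), hmem⟩
  have hvolU : volume (⋃ p : ℕ × Fin N, JJ p) < ⊤ := by
    rw [hcover, Real.volume_Ioo]
    exact ENNReal.ofReal_lt_top
  have hAESM : AEStronglyMeasurable v (volume.restrict (⋃ p : ℕ × Fin N, JJ p)) := by
    rw [aestronglyMeasurable_iUnion_iff]
    intro p
    refine (aestronglyMeasurable_const (b := c p.1 (p.2 : ℕ))).congr ?_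
    refine (ae_restrict_iff' (hJmeas p)).mpr (ae_of_all _ fun x hx => ?_)
    exact (hvc p.1 (p.2 : ℕ) p.2.2 x hx).symm
  have hbd : ∀ᵐ x ∂volume.restrict (⋃ p : ℕ × Fin N, JJ p),
      ‖v x‖ ≤ 2 ^ (L + m + 1) := by
    refine (ae_restrict_iff' (MeasurableSet.iUnion hJmeas)).mpr
      (ae_of_all _ fun x hx => ?_)
    obtain ⟨p, hp⟩ := Set.mem_iUnion.mp hx
    rw [hvc p.1 (p.2 : ℕ) p.2.2 x hp,
      Real.norm_of_nonneg (hcnn p.1 (p.2 : ℕ) p.2.2)]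
    exact hcB p.1 (p.2 : ℕ) p.2.2
  have hInt : IntegrableOn v (⋃ p : ℕ × Fin N, JJ p) volume :=
    ⟨hAESM, HasFiniteIntegral.restrict_of_bounded _ hvolU hbd⟩
  have hHS : HasSum (fun p : ℕ × Fin N => ∫ x in JJ p, v x)
      (∫ x in ⋃ p : ℕ × Fin N, JJ p, v x) :=
    hasSum_integral_iUnion hJmeas hdisj hInt
  have hint_eq : (∫ x in Set.Ico (0 : ℝ) 1, v x)
      = ∫ x in ⋃ p : ℕ × Fin N, JJ p, v x := by
    rw [hcover]
    exact (setIntegral_congr_set Ioo_ae_eq_Ico).symm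
  -- value of the integral on each cell
  have hcell : ∀ p : ℕ × Fin N,
      (∫ x in JJ p, v x) = ((2 : ℝ) ^ (p.1 + m))⁻¹ * c p.1 (p.2 : ℕ) := by
    intro p
    rw [setIntegral_congr_fun (hJmeas p) (fun x hx => hvc p.1 (p.2 : ℕ) p.2.2 x hx),
      setIntegral_const]
    have hvol : volume (JJ p) = ENNReal.ofReal (((2 : ℝ) ^ (p.1 + m))⁻¹) := by
      rw [hJJ]
      simp only [stmt13J, Real.volume_Ico]
      congr 1
      field_simp
      ring
    rw [measureReal_def, hvol, ENNReal.toReal_ofReal (by positivity), smul_eq_mul]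
  -- fiberwise sums
  set S : ℕ → ℝ := fun j => (2 * C) * ((2 : ℝ) ^ (min j L) / 2 ^ j) with hS
  have hfib : ∀ j : ℕ, HasSum (fun i : Fin N => ∫ x in JJ (j, i), v x) (S j) := by
    intro j
    have hsum_eq : ∑ i : Fin N, ((2 : ℝ) ^ (j + m))⁻¹ * c j (i : ℕ) = S j := by
      rw [Fin.sum_univ_eq_sum_range (fun i => ((2 : ℝ) ^ (j + m))⁻¹ * c j i) N]
      have hterm : ∀ i ∈ Finset.range N, ((2 : ℝ) ^ (j + m))⁻¹ * c j i
          = (2 * ((2 : ℝ) ^ (min j L) / 2 ^ j)) * (1 / ((2 : ℝ) ^ m - i - 1)) := by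
        intro i hi
        have hdpos : (0 : ℝ) < (2 : ℝ) ^ m - i - 1 :=
          lt_of_lt_of_le one_pos (hden i (Finset.mem_range.mp hi))
        rw [hc]
        simp only
        rw [pow_add, pow_succ, pow_add]
        field_simp
      rw [Finset.sum_congr rfl hterm, ← Finset.mul_sum, hS, hC]
      ring
    rw [← hsum_eq]
    have := hasSum_fintype (fun i : Fin N => ∫ x in JJ (j, i), v x)
    convert this using 2 with i
    exact (hcell (j, i)).symm
  have hmain : HasSum S (∫ x in ⋃ p : ℕ × Fin N, JJ p, v x) :=
    HasSum.prod_fiberwise hHS hfib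
  have hS2 : HasSum S ((2 * C) * ((L : ℝ) + 2)) := (stmt13_hasSum L).mul_left (2 * C)
  have heq : (∫ x in Set.Ico (0 : ℝ) 1, v x) = 2 * ((L : ℝ) + 2) * C := by
    rw [hint_eq, hmain.unique hS2]; ring
  refine ⟨heq, ?_⟩
  -- now the bound
  have hr0 : 0 < r := lt_of_lt_of_le (Real.exp_pos _) hr
  have hlogr : 1 + 8 / ε ≤ Real.log r := (Real.le_log_iff_exp_le hr0).mpr hr
  have h8ε : 0 < 8 / ε := by positivity
  have hlogr1 : 1 ≤ Real.log r := by linarith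
  have h8 : 8 / ε ≤ Real.log r := by linarith
  have hr1 : 1 ≤ r := by
    calc (1 : ℝ) = Real.exp 0 := Real.exp_zero.symm
    _ ≤ Real.exp (1 + 8 / ε) := Real.exp_le_exp.mpr (by linarith)
    _ ≤ r := hr
  have hfloor1 : 1 ≤ ⌊r⌋₊ := Nat.le_floor (by exact_mod_cast hr1)
  have hLlog : (L : ℝ) * Real.log 2 ≤ Real.log r := by
    have h2L : ((2 : ℝ)) ^ L ≤ r := by
      calc ((2 : ℝ)) ^ L = ((2 ^ L : ℕ) : ℝ) := by push_cast; ring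
      _ ≤ ((⌊r⌋₊ : ℕ) : ℝ) := by exact_mod_cast Nat.pow_log_le_self 2 (by omega)
      _ ≤ r := Nat.floor_le hr0.le
    have := Real.log_le_log (by positivity) h2L
    rwa [Real.log_pow] at this
  have hlog2lt : Real.log 2 < 1 := by
    have := Real.log_two_lt_d9; linarith
  have hlog2gt : (0.6931471803 : ℝ) < Real.log 2 := Real.log_two_gt_d9
  have hL2 : (L : ℝ) ≤ 2 * Real.log r := by
    nlinarith [mul_le_mul_of_nonneg_left hlog2gt.le (Nat.cast_nonneg (α := ℝ) L)]
  have hC0 : 0 ≤ C := by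
    rw [hC]
    apply Finset.sum_nonneg
    intro i hi
    have := hden i (Finset.mem_range.mp hi)
    positivity
  have hCle : C ≤ Real.log 2 + 4 / 2 ^ m := stmt13_sum_bound hm2
  have h2m : 64 / ε < 2 ^ m :=
    lt_of_lt_of_le hM₀ (pow_le_pow_right₀ (by norm_num) (le_trans (le_max_right _ _) hm))
  have ht0 : (0 : ℝ) < 2 ^ m := by positivity
  rw [heq]
  have step1 : 2 * ((L : ℝ) + 2) * C ≤ 2 * ((L : ℝ) + 2) * (Real.log 2 + 4 / 2 ^ m) := by
    apply mul_le_mul_of_nonneg_left hCle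
    positivity
  have hlogrnn : 0 ≤ Real.log r := by linarith
  have hB : 4 * Real.log 2 ≤ (ε / 2) * Real.log r := by
    have h4 : (4 : ℝ) ≤ ε / 2 * Real.log r := by
      have e1 : ε / 2 * (8 / ε) = 4 := by field_simp; ring
      have e2 : ε / 2 * (8 / ε) ≤ ε / 2 * Real.log r := by
        apply mul_le_mul_of_nonneg_left h8 (by positivity)
      linarith
    linarith
  have hCt : (8 * (L : ℝ) + 16) / 2 ^ m ≤ (ε / 2) * Real.log r := by
    rw [div_le_iff₀ ht0]
    have e1 : ε / 2 * Real.log r * (64 / ε) = 32 * Real.log r := by field_simp; ring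
    have e2 : ε / 2 * Real.log r * (64 / ε) ≤ ε / 2 * Real.log r * 2 ^ m := by
      apply mul_le_mul_of_nonneg_left h2m.le
      exact mul_nonneg (by positivity) hlogrnn
    linarith
  have hexp : 2 * ((L : ℝ) + 2) * (Real.log 2 + 4 / 2 ^ m)
      = 2 * (L : ℝ) * Real.log 2 + 4 * Real.log 2 + (8 * (L : ℝ) + 16) / 2 ^ m := by
    field_simp
    ring
  rw [hexp] at step1
  have hA : 2 * (L : ℝ) * Real.log 2 ≤ 2 * Real.log r := by linarith
  calc 2 * ((L : ℝ) + 2) * C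
      ≤ 2 * (L : ℝ) * Real.log 2 + 4 * Real.log 2 + (8 * (L : ℝ) + 16) / 2 ^ m := step1
    _ ≤ 2 * Real.log r + (ε / 2) * Real.log r + (ε / 2) * Real.log r := by linarith
    _ = (2 + ε) * Real.log r := by ring
end

section
/- For every ε > 0 there exist M ∈ ℕ and R > 0 such that for all m ≥ M and r ≥ R, the piecewise constant function w_m^r on [0,1) (taking value z_{min{j,⌊log₂ r⌋-1}, i} = 2^{min{j,⌊log₂ r⌋-1}+m+1}/(2^m - i) - min{j,⌊log₂ r⌋-1} - 1 on J_{j,i}^m) satisfies E(w_m^r) ≥ (2-ε)·log r. -/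
open MeasureTheory Set


noncomputable def zval (m k j i : ℕ) : ℝ :=
  2 ^ (min j k + m + 1) / ((2:ℝ) ^ m - i) - (min j k : ℝ) - 1

noncomputable def jfun (x : ℝ) : ℕ := Nat.clog 2 ⌈1/x⌉₊ - 1

noncomputable def ifun (m : ℕ) (x : ℝ) : ℕ :=
  ⌈((1:ℝ)/2^(jfun x) - x) * 2^(jfun x + m)⌉₊ - 1

lemma jfun_spec {x : ℝ} (hx : x ∈ Ioo (0:ℝ) 1) :
    (1:ℝ)/2^(jfun x + 1) ≤ x ∧ x < 1/2^(jfun x) := by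
  obtain ⟨hx0, hx1⟩ := hx
  have h1x : (1:ℝ) < 1/x := one_lt_one_div hx0 hx1
  have hn2 : 2 ≤ ⌈1/x⌉₊ := by
    have : (1:ℕ) < ⌈1/x⌉₊ := Nat.lt_ceil.mpr (by exact_mod_cast h1x)
    omega
  have hc1 : 1 ≤ Nat.clog 2 ⌈1/x⌉₊ := Nat.clog_pos one_lt_two hn2
  have hj : jfun x + 1 = Nat.clog 2 ⌈1/x⌉₊ := by unfold jfun; omega
  constructor
  · have h2 : (1:ℝ)/x ≤ 2^(jfun x + 1) := by
      calc (1:ℝ)/x ≤ ⌈1/x⌉₊ := Nat.le_ceil _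
      _ ≤ ((2^(Nat.clog 2 ⌈1/x⌉₊) : ℕ) : ℝ) := by
          exact_mod_cast Nat.le_pow_clog one_lt_two _
      _ = 2^(jfun x + 1) := by rw [hj]; push_cast; ring
    rw [div_le_iff₀ hx0] at h2
    rw [div_le_iff₀ (by positivity)]
    linarith
  · have h2 : (2:ℝ)^(jfun x) < 1/x := by
      by_contra h
      push_neg at h
      have : ⌈1/x⌉₊ ≤ 2^(jfun x) := Nat.ceil_le.mpr (by exact_mod_cast h)
      have h3 : 2^(Nat.clog 2 ⌈1/x⌉₊ - 1) < ⌈1/x⌉₊ := Nat.pow_pred_clog_lt_self one_lt_two hn2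
      unfold jfun at this
      omega
    rw [lt_div_iff₀ hx0] at h2
    rw [lt_div_iff₀ (by positivity)]
    linarith

lemma cover_spec (m : ℕ) {x : ℝ} (hx : x ∈ Ioo (0:ℝ) 1) :
    ifun (m+1) x < 2^m ∧
    x ∈ Ico ((1:ℝ)/2^(jfun x) - ((ifun (m+1) x : ℝ) + 1)/2^(jfun x + (m+1)))
            ((1:ℝ)/2^(jfun x) - (ifun (m+1) x : ℝ)/2^(jfun x + (m+1))) := by
  obtain ⟨hxl, hxr⟩ := jfun_spec hx
  set j := jfun x with hjdef
  set y : ℝ := ((1:ℝ)/2^j - x) * 2^(j + (m+1)) with hydef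
  have hp : (0:ℝ) < 2^(j + (m+1)) := by positivity
  have hy0 : 0 < y := by
    apply mul_pos _ hp
    linarith
  have hkey : (2:ℝ)^(j + (m+1)) = 2^(j+1) * 2^m := by rw [← pow_add]; ring_nf
  have hy1 : y ≤ 2^m := by
    have h1 : (1:ℝ)/2^j - x ≤ 1/2^(j+1) := by
      have : (1:ℝ)/2^j = 2 * (1/2^(j+1)) := by
        rw [pow_succ]; ring
      linarith
    calc y ≤ (1/2^(j+1)) * 2^(j + (m+1)) := by
          apply mul_le_mul_of_nonneg_right h1 (le_of_lt hp)
      _ = 2^m := by rw [hkey]; field_simp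
  have hcy : 1 ≤ ⌈y⌉₊ := Nat.one_le_ceil_iff.mpr hy0
  have hieq : (ifun (m+1) x : ℕ) + 1 = ⌈y⌉₊ := by
    unfold ifun; rw [← hjdef, ← hydef]; omega
  have hilt : ifun (m+1) x < 2^m := by
    have : ⌈y⌉₊ ≤ 2^m := Nat.ceil_le.mpr (by exact_mod_cast hy1)
    omega
  refine ⟨hilt, ?_, ?_⟩
  · -- x ≥ 1/2^j - (i+1)/2^(j+m+1)  ⟺  y ≤ i+1
    have h1 : y ≤ (ifun (m+1) x : ℝ) + 1 := by
      have := Nat.le_ceil y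
      rw [← hieq] at this
      push_cast at this
      linarith
    have h2 : (1:ℝ)/2^j - x ≤ ((ifun (m+1) x : ℝ) + 1)/2^(j + (m+1)) := by
      rw [le_div_iff₀ hp]
      calc ((1:ℝ)/2^j - x) * 2^(j + (m+1)) = y := rfl
        _ ≤ _ := h1
    linarith
  · -- x < 1/2^j - i/2^(j+m+1)  ⟺  i < y
    have h1 : (ifun (m+1) x : ℝ) < y := by
      have h := Nat.ceil_lt_add_one (le_of_lt hy0)
      have : ((⌈y⌉₊ : ℝ)) = (ifun (m+1) x : ℝ) + 1 := by exact_mod_cast hieq.symm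
      linarith
    have h2 : ((ifun (m+1) x : ℝ))/2^(j + (m+1)) < (1:ℝ)/2^j - x := by
      rw [div_lt_iff₀ hp]
      calc ((ifun (m+1) x : ℝ)) < y := h1
        _ = ((1:ℝ)/2^j - x) * 2^(j + (m+1)) := rfl
    linarith

noncomputable def gfun (m k : ℕ) (x : ℝ) : ℝ := zval m k (jfun x) (ifun m x)

lemma jfun_measurable : Measurable jfun := by
  have h1 : Measurable fun x : ℝ => ⌈1/x⌉₊ :=
    (measurable_const.div measurable_id).nat_ceil
  exact (measurable_of_countable (fun n : ℕ => Nat.clog 2 n - 1)).comp h1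

lemma ifun_measurable (m : ℕ) : Measurable (ifun m) := by
  have h1 : Measurable fun x : ℝ => ((1:ℝ)/2^(jfun x) - x) * 2^(jfun x + m) := by
    apply Measurable.mul
    · exact (((measurable_of_countable (fun n : ℕ => (1:ℝ)/2^n)).comp
        jfun_measurable)).sub measurable_id
    · exact (measurable_of_countable (fun n : ℕ => (2:ℝ)^(n + m))).comp jfun_measurable
  exact (measurable_of_countable (fun n : ℕ => n - 1)).comp h1.nat_ceil

lemma gfun_measurable (m k : ℕ) : Measurable (gfun m k) := by
  unfold gfun zval
  apply Measurable.sub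
  apply Measurable.sub
  · apply Measurable.div
    · exact (measurable_of_countable (fun n : ℕ => (2:ℝ)^(min n k + m + 1))).comp
        jfun_measurable
    · exact measurable_const.sub
        ((measurable_of_countable (fun n : ℕ => (n:ℝ))).comp (ifun_measurable m))
  · exact (measurable_of_countable (fun n : ℕ => min (n:ℝ) (k:ℝ))).comp jfun_measurable
  · exact measurable_const

lemma zval_bounds (m k j i : ℕ) (hi : i < 2^m) :
    0 ≤ zval (m+1) k j i ∧ zval (m+1) k j i ≤ 2^(k+2) := by
  set a := min j k with ha
  have hak : a ≤ k := min_le_right _ _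
  have hi' : (i:ℝ) < 2^m := by exact_mod_cast hi
  have h2m : (2:ℝ)^(m+1) = 2^m * 2 := pow_succ 2 m
  have hd1 : (2:ℝ)^m ≤ 2^(m+1) - i := by linarith
  have hd0 : (0:ℝ) < 2^m := by positivity
  have hd0' : (0:ℝ) < 2^(m+1) - i := lt_of_lt_of_le hd0 hd1
  have hd2 : (2:ℝ)^(m+1) - i ≤ 2^(m+1) := by
    have : (0:ℝ) ≤ i := Nat.cast_nonneg i
    linarith
  have hnum : (0:ℝ) < 2^(a + (m+1) + 1) := by positivity
  unfold zval
  have hcast : min (j:ℝ) (k:ℝ) = (a:ℝ) := by rw [ha]; exact_mod_cast (Nat.cast_min (m := j) (n := k)).symm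
  rw [hcast, ← ha]
  constructor
  · have h1 : (2:ℝ)^(a+1) ≤ 2^(a + (m+1) + 1) / (2^(m+1) - i) := by
      rw [le_div_iff₀ hd0']
      calc (2:ℝ)^(a+1) * (2^(m+1) - i) ≤ 2^(a+1) * 2^(m+1) := by
            apply mul_le_mul_of_nonneg_left hd2 (by positivity)
        _ = 2^(a + (m+1) + 1) := by rw [← pow_add]; ring_nf
    have h2 : (a:ℝ) + 1 ≤ 2^(a+1) := by
      have := Nat.lt_two_pow_self (n := a)
      have h3 : (a:ℝ) < 2^a := by exact_mod_cast this
      have h4 : (2:ℝ)^(a+1) = 2^a * 2 := pow_succ 2 a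
      have h5 : (1:ℝ) ≤ 2^a := one_le_pow₀ (by norm_num)
      linarith
    linarith
  · have h1 : (2:ℝ)^(a + (m+1) + 1) / (2^(m+1) - i) ≤ 2^(a+2) := by
      rw [div_le_iff₀ hd0']
      calc (2:ℝ)^(a + (m+1) + 1) = 2^(a+2) * 2^m := by rw [← pow_add]; ring_nf
        _ ≤ 2^(a+2) * (2^(m+1) - i) := by
            apply mul_le_mul_of_nonneg_left hd1 (by positivity)
    have h2 : (2:ℝ)^(a+2) ≤ 2^(k+2) := by
      apply pow_le_pow_right₀ (by norm_num) (by omega)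
    have h3 : (0:ℝ) ≤ a := Nat.cast_nonneg a
    linarith

lemma restrict_Ico_eq : volume.restrict (Ico (0:ℝ) 1) = volume.restrict (Ioo (0:ℝ) 1) :=
  Measure.restrict_congr_set Ioo_ae_eq_Ico.symm

lemma w_eq (m k : ℕ) (w : ℝ → ℝ)
    (hw : ∀ j i : ℕ, i < 2^m →
      ∀ x ∈ Ico ((1:ℝ)/2^j - ((i:ℝ)+1)/2^(j+(m+1))) ((1:ℝ)/2^j - (i:ℝ)/2^(j+(m+1))),
        w x = zval (m+1) k j i)
    {x : ℝ} (hx : x ∈ Ioo (0:ℝ) 1) :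
    w x = gfun (m+1) k x := by
  obtain ⟨hi, hmem⟩ := cover_spec m hx
  exact hw _ _ hi x hmem

lemma gfun_bounds (m k : ℕ) {x : ℝ} (hx : x ∈ Ioo (0:ℝ) 1) :
    0 ≤ gfun (m+1) k x ∧ gfun (m+1) k x ≤ 2^(k+2) := by
  obtain ⟨hi, _⟩ := cover_spec m hx
  exact zval_bounds m k (jfun x) (ifun (m+1) x) hi

lemma w_integrableOn (m k : ℕ) (w : ℝ → ℝ)
    (hw : ∀ j i : ℕ, i < 2^m →
      ∀ x ∈ Ico ((1:ℝ)/2^j - ((i:ℝ)+1)/2^(j+(m+1))) ((1:ℝ)/2^j - (i:ℝ)/2^(j+(m+1))),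
        w x = zval (m+1) k j i) :
    IntegrableOn w (Ico (0:ℝ) 1) := by
  have hmemae : ∀ᵐ x ∂(volume.restrict (Ico (0:ℝ) 1)), x ∈ Ioo (0:ℝ) 1 := by
    rw [restrict_Ico_eq]
    exact ae_restrict_mem measurableSet_Ioo
  have hg : IntegrableOn (gfun (m+1) k) (Ico (0:ℝ) 1) := by
    apply Measure.integrableOn_of_bounded (M := 2^(k+2)) measure_Ico_lt_top.ne
      (gfun_measurable (m+1) k).aestronglyMeasurable
    filter_upwards [hmemae] with x hx
    rw [Real.norm_eq_abs, abs_le]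
    obtain ⟨h1, h2⟩ := gfun_bounds m k hx
    constructor <;> [linarith [pow_pos (by norm_num : (0:ℝ) < 2) (k+2)]; exact h2]
  apply hg.congr
  filter_upwards [hmemae] with x hx
  exact (w_eq m k w hw hx).symm

lemma block_integral (m k : ℕ) (w : ℝ → ℝ)
    (hw : ∀ j i : ℕ, i < 2^m →
      ∀ x ∈ Ico ((1:ℝ)/2^j - ((i:ℝ)+1)/2^(j+(m+1))) ((1:ℝ)/2^j - (i:ℝ)/2^(j+(m+1))),
        w x = zval (m+1) k j i)
    (j i : ℕ) (hi : i < 2^m) :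
    ∫ x in Ico ((1:ℝ)/2^j - ((i:ℝ)+1)/2^(j+(m+1))) ((1:ℝ)/2^j - (i:ℝ)/2^(j+(m+1))), w x
      = (1/2^(j+(m+1))) * zval (m+1) k j i := by
  rw [setIntegral_congr_fun measurableSet_Ico (fun x hx => hw j i hi x hx)]
  rw [setIntegral_const, Real.volume_real_Ico]
  have hlen : ((1:ℝ)/2^j - (i:ℝ)/2^(j+(m+1))) - ((1:ℝ)/2^j - ((i:ℝ)+1)/2^(j+(m+1)))
      = 1/2^(j+(m+1)) := by ring
  rw [max_eq_left (by rw [hlen]; positivity), hlen, smul_eq_mul]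

lemma row_integral (m k : ℕ) (w : ℝ → ℝ)
    (hw : ∀ j i : ℕ, i < 2^m →
      ∀ x ∈ Ico ((1:ℝ)/2^j - ((i:ℝ)+1)/2^(j+(m+1))) ((1:ℝ)/2^j - (i:ℝ)/2^(j+(m+1))),
        w x = zval (m+1) k j i)
    (hInt : IntegrableOn w (Ico (0:ℝ) 1)) (j : ℕ) :
    ∫ x in Ico ((1:ℝ)/2^(j+1)) ((1:ℝ)/2^j), w x
      = ∑ i ∈ Finset.range (2^m), (1/2^(j+(m+1))) * zval (m+1) k j i := by
  have hpos : (0:ℝ) < 2^(j+(m+1)) := by positivity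
  have hsplit : (2:ℝ)^(j+(m+1)) = 2^(j+1) * 2^m := by rw [← pow_add]; ring_nf
  have hhalf : ((2:ℝ)^m)/2^(j+(m+1)) = 1/2^(j+1) := by
    rw [hsplit]; field_simp
  have hdouble : (1:ℝ)/2^j = 2*(1/2^(j+1)) := by rw [pow_succ]; ring
  have key : ∀ n, n ≤ 2^m →
      ∫ x in Ico ((1:ℝ)/2^j - ((n:ℕ):ℝ)/2^(j+(m+1))) ((1:ℝ)/2^j), w x
        = ∑ i ∈ Finset.range n, (1/2^(j+(m+1))) * zval (m+1) k j i := by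
    intro n
    induction n with
    | zero => intro _; simp
    | succ n ih =>
      intro hn
      have hn' : n ≤ 2^m := by omega
      have hnR : ((n:ℝ)) + 1 ≤ (2:ℝ)^m := by
        have : ((n+1:ℕ):ℝ) ≤ ((2^m:ℕ):ℝ) := by exact_mod_cast hn
        push_cast at this; linarith
      have hup : ((n:ℝ) + 1)/2^(j+(m+1)) ≤ 1/2^(j+1) := by
        rw [← hhalf]
        gcongr
      have hAB : (1:ℝ)/2^j - ((n:ℝ)+1)/2^(j+(m+1)) ≤ (1:ℝ)/2^j - (n:ℝ)/2^(j+(m+1)) := by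
        gcongr
        linarith
      have hBC : (1:ℝ)/2^j - (n:ℝ)/2^(j+(m+1)) ≤ (1:ℝ)/2^j := by
        have : (0:ℝ) ≤ (n:ℝ)/2^(j+(m+1)) := by positivity
        linarith
      have hA0 : (0:ℝ) ≤ (1:ℝ)/2^j - ((n:ℝ)+1)/2^(j+(m+1)) := by
        have h1 : (0:ℝ) ≤ 1/2^(j+1) := by positivity
        linarith
      have hC1 : (1:ℝ)/2^j ≤ 1 := by
        rw [div_le_one (by positivity)]
        exact one_le_pow₀ (by norm_num)
      have hsub1 : Ico ((1:ℝ)/2^j - ((n:ℝ)+1)/2^(j+(m+1))) ((1:ℝ)/2^j - (n:ℝ)/2^(j+(m+1)))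
          ⊆ Ico (0:ℝ) 1 := Ico_subset_Ico hA0 (le_trans hBC hC1)
      have hsub2 : Ico ((1:ℝ)/2^j - (n:ℝ)/2^(j+(m+1))) ((1:ℝ)/2^j) ⊆ Ico (0:ℝ) 1 :=
        Ico_subset_Ico (le_trans hA0 hAB) hC1
      have hcast : (((n+1:ℕ)):ℝ) = (n:ℝ) + 1 := by push_cast; ring
      rw [hcast]
      rw [← Ico_union_Ico_eq_Ico hAB hBC]
      rw [setIntegral_union (Set.Ico_disjoint_Ico_same) measurableSet_Ico
        (hInt.mono_set hsub1) (hInt.mono_set hsub2)]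
      rw [ih hn', block_integral m k w hw j n (by omega), Finset.sum_range_succ]
      ring
  have h := key (2^m) le_rfl
  have h2 : (1:ℝ)/2^j - ((2^m:ℕ):ℝ)/2^(j+(m+1)) = 1/2^(j+1) := by
    push_cast
    rw [hhalf]
    linarith
  rwa [h2] at h

lemma cols_integral (w : ℝ → ℝ) (hInt : IntegrableOn w (Ico (0:ℝ) 1)) (K : ℕ) :
    ∫ x in Ico ((1:ℝ)/2^K) 1, w x
      = ∑ j ∈ Finset.range K, ∫ x in Ico ((1:ℝ)/2^(j+1)) ((1:ℝ)/2^j), w x := by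
  induction K with
  | zero => simp
  | succ K ih =>
    have hAB : (1:ℝ)/2^(K+1) ≤ 1/2^K :=
      one_div_le_one_div_of_le (by positivity) (pow_le_pow_right₀ one_le_two (Nat.le_succ K))
    have hBC : (1:ℝ)/2^K ≤ 1 := by
      rw [div_le_one (by positivity)]
      exact one_le_pow₀ (by norm_num)
    have hA0 : (0:ℝ) ≤ 1/2^(K+1) := by positivity
    rw [← Ico_union_Ico_eq_Ico hAB hBC,
      setIntegral_union Set.Ico_disjoint_Ico_same measurableSet_Ico
        (hInt.mono_set (Ico_subset_Ico hA0 hBC))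
        (hInt.mono_set (Ico_subset_Ico (le_trans hA0 hAB) le_rfl)),
      ih, Finset.sum_range_succ]
    ring

lemma sum_geom_arith (n : ℕ) :
    ∑ j ∈ Finset.range n, ((j:ℝ)+1)/2^(j+1) = 2 - ((n:ℝ)+2)/2^n := by
  induction n with
  | zero => norm_num
  | succ n ih =>
    rw [Finset.sum_range_succ, ih]
    have h : (0:ℝ) < 2^n := by positivity
    push_cast
    field_simp
    ring

lemma harmonic_lb (N : ℕ) : ∀ n ≤ N,
    Real.log (N+1) - Real.log ((N:ℝ) - n + 1) ≤ ∑ i ∈ Finset.range n, 1/((N:ℝ) - i) := by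
  intro n
  induction n with
  | zero => intro _; simp
  | succ n ih =>
    intro hn
    have hn' : n ≤ N := by omega
    have ha1 : (1:ℝ) ≤ (N:ℝ) - n := by
      have : ((n+1:ℕ):ℝ) ≤ (N:ℕ) := by exact_mod_cast hn
      push_cast at this; linarith
    have ha0 : (0:ℝ) < (N:ℝ) - n := by linarith
    have hstep : Real.log ((N:ℝ) - n + 1) - Real.log ((N:ℝ) - n) ≤ 1/((N:ℝ) - n) := by
      rw [← Real.log_div (by linarith) (by linarith)]
      have h2 := Real.log_le_sub_one_of_pos
        (show (0:ℝ) < ((N:ℝ) - n + 1)/((N:ℝ) - n) by positivity)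
      have h3 : ((N:ℝ) - n + 1)/((N:ℝ) - n) - 1 = 1/((N:ℝ) - n) := by
        field_simp; ring
      linarith
    rw [Finset.sum_range_succ]
    have hcast : (N:ℝ) - ((n+1:ℕ):ℝ) + 1 = (N:ℝ) - n := by push_cast; ring
    rw [hcast]
    have := ih hn'
    linarith

lemma Sm_lb (m : ℕ) :
    Real.log 2 - 2/2^(m+1) ≤ ∑ i ∈ Finset.range (2^m), 1/((2:ℝ)^(m+1) - i) := by
  have h := harmonic_lb (2^(m+1)) (2^m) (by
    have := Nat.pow_le_pow_right (show 1 ≤ 2 by norm_num) (Nat.le_succ m)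
    omega)
  have hcast : ((2^(m+1):ℕ):ℝ) = 2^(m+1) := by push_cast; ring
  have hcast2 : ((2^m:ℕ):ℝ) = 2^m := by push_cast; ring
  rw [hcast, hcast2] at h
  have hd : (2:ℝ)^(m+1) = 2^m * 2 := pow_succ 2 m
  have hpos : (0:ℝ) < 2^m := by positivity
  have hsub : (2:ℝ)^(m+1) - 2^m + 1 = 2^m + 1 := by rw [hd]; ring
  rw [hsub] at h
  -- log(2^(m+1)+1) ≥ (m+1) log 2
  have h1 : ((m:ℝ)+1) * Real.log 2 ≤ Real.log ((2:ℝ)^(m+1) + 1) := by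
    have := Real.log_le_log (by positivity : (0:ℝ) < 2^(m+1))
      (show (2:ℝ)^(m+1) ≤ 2^(m+1) + 1 by linarith)
    rw [Real.log_pow] at this
    push_cast at this
    linarith
  -- log(2^m+1) ≤ m log 2 + 2/2^(m+1)
  have h2 : Real.log ((2:ℝ)^m + 1) ≤ (m:ℝ) * Real.log 2 + 2/2^(m+1) := by
    have hlog : Real.log ((2:ℝ)^m + 1) - Real.log ((2:ℝ)^m) ≤ 1/2^m := by
      rw [← Real.log_div (by positivity) (by positivity)]
      have hq := Real.log_le_sub_one_of_pos
        (show (0:ℝ) < ((2:ℝ)^m + 1)/2^m by positivity)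
      have h3 : ((2:ℝ)^m + 1)/2^m - 1 = 1/2^m := by field_simp; ring
      linarith
    have hlp : Real.log ((2:ℝ)^m) = (m:ℝ) * Real.log 2 := by
      rw [Real.log_pow]
    have he : (1:ℝ)/2^m = 2/2^(m+1) := by rw [hd]; field_simp
    rw [hlp, he] at hlog
    linarith
  calc Real.log 2 - 2/2^(m+1)
      = (((m:ℝ)+1) * Real.log 2) - ((m:ℝ) * Real.log 2 + 2/2^(m+1)) := by ring
    _ ≤ Real.log ((2:ℝ)^(m+1) + 1) - Real.log ((2:ℝ)^m + 1) := by
        apply sub_le_sub h1 h2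
    _ ≤ _ := h

lemma row_sum_eq (m k j : ℕ) (hj : j ≤ k) :
    ∑ i ∈ Finset.range (2^m), (1/2^(j+(m+1))) * zval (m+1) k j i
      = 2 * (∑ i ∈ Finset.range (2^m), 1/((2:ℝ)^(m+1) - i)) - ((j:ℝ)+1)/2^(j+1) := by
  have hmin : min j k = j := min_eq_left hj
  have hminR : min (j:ℝ) (k:ℝ) = (j:ℝ) := min_eq_left (by exact_mod_cast hj)
  have hterm : ∀ i : ℕ,
      (1/((2:ℝ)^(j+(m+1)))) * ((2:ℝ)^(j + (m+1) + 1)/((2:ℝ)^(m+1) - i) - (j:ℝ) - 1)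
        = 2 * (1/((2:ℝ)^(m+1) - i)) - ((j:ℝ)+1) * (1/2^(j+(m+1))) := by
    intro i
    have hD : (2:ℝ)^(j+(m+1)+1) = 2 * 2^(j+(m+1)) := by rw [pow_succ]; ring
    have h1 : (2:ℝ)^(j+(m+1)) * ((2:ℝ)^(j+(m+1)))⁻¹ = 1 := mul_inv_cancel₀ (by positivity)
    rw [hD]
    linear_combination (2 / ((2:ℝ)^(m+1) - i)) * h1
  calc ∑ i ∈ Finset.range (2^m), (1/2^(j+(m+1))) * zval (m+1) k j i
      = ∑ i ∈ Finset.range (2^m),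
          (2 * (1/((2:ℝ)^(m+1) - i)) - ((j:ℝ)+1) * (1/2^(j+(m+1)))) := by
        apply Finset.sum_congr rfl
        intro i _
        unfold zval
        rw [hmin, hminR]
        exact hterm i
    _ = 2 * (∑ i ∈ Finset.range (2^m), 1/((2:ℝ)^(m+1) - i)) - ((j:ℝ)+1)/2^(j+1) := by
        rw [Finset.sum_sub_distrib, ← Finset.mul_sum, Finset.sum_const, Finset.card_range,
          nsmul_eq_mul]
        congr 1
        push_cast
        rw [show (2:ℝ)^(j+(m+1)) = 2^(j+1)*2^m by rw [← pow_add]; ring_nf]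
        field_simp

/-- For every `ε > 0` there exist `M ∈ ℕ` and `R > 0` such that for all `m ≥ M` and `r ≥ R`:
any function `w` on `[0,1)` taking the value
`z_{min{j,⌊log₂ r⌋-1}, i} = 2^{min{j,⌊log₂ r⌋-1}+m+1}/(2^m - i) - min{j,⌊log₂ r⌋-1} - 1` on
`J_{j,i}^m = [1/2^j - (i+1)/2^{j+m}, 1/2^j - i/2^{j+m})` satisfies
`E(w) ≥ (2-ε)·log r`. -/
theorem stmt14 (ε : ℝ) (hε : 0 < ε) :
    ∃ M : ℕ, ∃ R : ℝ, 0 < R ∧ ∀ m : ℕ, M ≤ m → ∀ r : ℝ, R ≤ r → ∀ w : ℝ → ℝ,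
      (∀ j : ℕ, ∀ i : ℕ, i < 2 ^ (m - 1) →
        ∀ x ∈ Set.Ico ((1 : ℝ) / 2 ^ j - (i + 1) / 2 ^ (j + m))
            ((1 : ℝ) / 2 ^ j - i / 2 ^ (j + m)),
          w x = 2 ^ (min j (Nat.log 2 ⌊r⌋₊ - 1) + m + 1) / ((2 : ℝ) ^ m - i) -
            (min j (Nat.log 2 ⌊r⌋₊ - 1) : ℝ) - 1) →
      (2 - ε) * Real.log r ≤ ∫ x in Set.Ico (0 : ℝ) 1, w x := by
  obtain ⟨M₀, hM₀⟩ := pow_unbounded_of_one_lt (R := ℝ) (16/ε) one_lt_two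
  refine ⟨M₀ + 1, max 2 (Real.exp (8/ε)),
    lt_of_lt_of_le (by norm_num) (le_max_left _ _), ?_⟩
  intro m hm r hr w hw
  obtain ⟨m', rfl⟩ : ∃ m'', m = m'' + 1 := ⟨m - 1, by omega⟩
  simp only [Nat.add_sub_cancel] at hw
  set k := Nat.log 2 ⌊r⌋₊ - 1 with hk
  set L := Nat.log 2 ⌊r⌋₊ with hL
  have hr2 : (2:ℝ) ≤ r := le_trans (le_max_left _ _) hr
  have hr0 : (0:ℝ) < r := lt_of_lt_of_le two_pos hr2
  have hfloor2 : 2 ≤ ⌊r⌋₊ := Nat.le_floor (by exact_mod_cast hr2)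
  have hL1 : 1 ≤ L := Nat.log_pos one_lt_two hfloor2
  have hkL : k + 1 = L := by omega
  have hw' : ∀ j i : ℕ, i < 2^m' →
      ∀ x ∈ Ico ((1:ℝ)/2^j - ((i:ℝ)+1)/2^(j+(m'+1))) ((1:ℝ)/2^j - (i:ℝ)/2^(j+(m'+1))),
        w x = zval (m'+1) k j i := by
    intro j i hi x hx
    have h := hw j i hi x hx
    rw [h]
    unfold zval
    rw [show ((L:ℝ) - 1) = (k:ℝ) by
      have : ((k:ℝ)) + 1 = (L:ℝ) := by exact_mod_cast congrArg (Nat.cast (R := ℝ)) hkL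
      linarith]
  have hInt : IntegrableOn w (Ico (0:ℝ) 1) := w_integrableOn m' k w hw'
  have h0t : (0:ℝ) ≤ 1/2^L := by positivity
  have ht1 : (1:ℝ)/2^L ≤ 1 := by
    rw [div_le_one (by positivity)]
    exact one_le_pow₀ (by norm_num)
  have hsplit : ∫ x in Ico (0:ℝ) 1, w x
      = (∫ x in Ico (0:ℝ) (1/2^L), w x) + ∫ x in Ico ((1:ℝ)/2^L) 1, w x := by
    rw [← Ico_union_Ico_eq_Ico h0t ht1,
      setIntegral_union Set.Ico_disjoint_Ico_same measurableSet_Ico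
        (hInt.mono_set (Ico_subset_Ico le_rfl ht1))
        (hInt.mono_set (Ico_subset_Ico h0t le_rfl))]
  have htail : 0 ≤ ∫ x in Ico (0:ℝ) (1/2^L), w x := by
    apply setIntegral_nonneg_of_ae_restrict
    have h0 : ∀ᵐ x : ℝ ∂volume, x ∈ ({(0:ℝ)} : Set ℝ)ᶜ :=
      compl_mem_ae_iff.2 Real.volume_singleton
    filter_upwards [ae_restrict_mem measurableSet_Ico, ae_restrict_of_ae h0] with x hx hx0
    have hxIoo : x ∈ Ioo (0:ℝ) 1 :=
      ⟨lt_of_le_of_ne hx.1 (Ne.symm (by simpa using hx0)), lt_of_lt_of_le hx.2 ht1⟩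
    rw [w_eq m' k w hw' hxIoo]
    exact (gfun_bounds m' k hxIoo).1
  set Sm := ∑ i ∈ Finset.range (2^m'), 1/((2:ℝ)^(m'+1) - i) with hSm
  have hmain : ∫ x in Ico ((1:ℝ)/2^L) 1, w x
      = 2*(L:ℝ)*Sm - ∑ j ∈ Finset.range L, ((j:ℝ)+1)/2^(j+1) := by
    rw [cols_integral w hInt L]
    rw [Finset.sum_congr rfl (fun j hj => by
      rw [row_integral m' k w hw' hInt j,
        row_sum_eq m' k j (by
          have := Finset.mem_range.mp hj
          omega)])]
    rw [Finset.sum_sub_distrib, ← Finset.mul_sum, Finset.sum_const, Finset.card_range,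
      nsmul_eq_mul]
    ring
  have hsumle : ∑ j ∈ Finset.range L, ((j:ℝ)+1)/2^(j+1) ≤ 2 := by
    rw [sum_geom_arith]
    have : (0:ℝ) ≤ ((L:ℝ)+2)/2^L := by positivity
    linarith
  have hSmlb : Real.log 2 - ε/8 ≤ Sm := by
    have h1 := Sm_lb m'
    have hp : (16:ℝ)/ε < 2^(m'+1) :=
      lt_of_lt_of_le hM₀ (pow_le_pow_right₀ one_le_two (by omega))
    have h2 : 2/2^(m'+1) ≤ ε/8 := by
      rw [div_le_div_iff₀ (by positivity) (by norm_num)]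
      rw [div_lt_iff₀ hε] at hp
      linarith
    linarith
  have hlogr8 : 8/ε ≤ Real.log r :=
    (Real.le_log_iff_exp_le hr0).mpr (le_trans (le_max_right _ _) hr)
  have hlog2pos : (0:ℝ) < Real.log 2 := Real.log_pos one_lt_two
  have hupper : (L:ℝ) * Real.log 2 ≤ Real.log r := by
    have h1 : (2:ℕ)^L ≤ ⌊r⌋₊ := Nat.pow_log_le_self 2 (by omega)
    have h2 : ((2:ℝ))^L ≤ r := by
      calc ((2:ℝ))^L = ((2^L : ℕ) : ℝ) := by push_cast; ring
        _ ≤ (⌊r⌋₊ : ℝ) := by exact_mod_cast h1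
        _ ≤ r := Nat.floor_le hr0.le
    have h3 : Real.log ((2:ℝ)^L) ≤ Real.log r :=
      (Real.log_le_log_iff (by positivity) hr0).mpr h2
    rwa [Real.log_pow] at h3
  have hlower : Real.log r ≤ ((L:ℝ)+1) * Real.log 2 := by
    have h1 : ⌊r⌋₊ < 2^(L+1) := Nat.lt_pow_succ_log_self one_lt_two _
    have h2 : r ≤ ((2:ℝ))^(L+1) := by
      have h3 : (⌊r⌋₊:ℝ) + 1 ≤ ((2^(L+1):ℕ):ℝ) := by exact_mod_cast h1
      have h4 := Nat.lt_floor_add_one r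
      push_cast at h3
      linarith
    have h5 : Real.log r ≤ Real.log ((2:ℝ)^(L+1)) :=
      (Real.log_le_log_iff hr0 (by positivity)).mpr h2
    rw [Real.log_pow] at h5
    push_cast at h5
    linarith
  have hLnn : (0:ℝ) ≤ (L:ℝ) := Nat.cast_nonneg L
  have hLle : (L:ℝ) ≤ 2 * Real.log r := by
    have h5 : (1:ℝ)/2 ≤ Real.log 2 := by
      have := Real.log_two_gt_d9
      linarith
    nlinarith
  have hlog2le1 : Real.log 2 ≤ 1 := by
    have := Real.log_two_lt_d9
    linarith
  have e1 : 2*(L:ℝ)*Sm - 2 ≤ ∫ x in Ico (0:ℝ) 1, w x := by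
    rw [hsplit, hmain]
    linarith
  have e2 : 2*(L:ℝ)*(Real.log 2) - (L:ℝ)*(ε/4) ≤ 2*(L:ℝ)*Sm := by
    nlinarith
  have e4 : (L:ℝ)*(ε/4) ≤ (ε/2)*Real.log r := by
    nlinarith
  have e5 : (4:ℝ) ≤ (ε/2)*Real.log r := by
    have h6 : (ε/2)*(8/ε) ≤ (ε/2)*Real.log r :=
      mul_le_mul_of_nonneg_left hlogr8 (by positivity)
    have h7 : (ε/2)*(8/ε) = 4 := by field_simp; ring
    linarith
  have e3 : 2*Real.log r - 2*Real.log 2 ≤ 2*(L:ℝ)*Real.log 2 := by linarith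
  linarith
end

section
/- Let τ̂ be the transfer operator of the doubling map with respect to Lebesgue measure, given by (τ̂ζ)(x) = (1/2)(ζ(x/2) + ζ((x+1)/2)). Then for every function ζ of bounded variation on [0,1), V(τ̂ζ) ≤ (1/2)·V(ζ), where V denotes total variation. Consequently, for all φ ∈ L¹ and ζ ∈ BV, the correlation satisfies |∫(φ∘τⁿ)·ζ dλ - ∫φ dλ·∫ζ dλ| ≤ 2^{-n}·‖φ‖₁·V(ζ). -/
open MeasureTheory Set

/-- The transfer operator of the doubling map with respect to Lebesgue measure:
`(τ̂ζ)(x) = (1/2)(ζ(x/2) + ζ((x+1)/2))`. -/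
noncomputable def transferOp (ζ : ℝ → ℝ) (x : ℝ) : ℝ := (ζ (x / 2) + ζ ((x + 1) / 2)) / 2

namespace Stmt18Aux

notation "I01" => Set.Ico (0 : ℝ) 1

lemma edist_half_add (a b c d : ℝ) :
    edist ((a + b) / 2) ((c + d) / 2) ≤ 2⁻¹ * edist a c + 2⁻¹ * edist b d := by
  rw [edist_dist, edist_dist, edist_dist]
  have h1 : dist ((a + b) / 2) ((c + d) / 2) ≤ 2⁻¹ * (dist a c + dist b d) := by
    rw [Real.dist_eq, Real.dist_eq, Real.dist_eq]
    have : (a + b) / 2 - (c + d) / 2 = 2⁻¹ * ((a - c) + (b - d)) := by ring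
    rw [this, abs_mul]
    have := abs_add_le (a - c) (b - d)
    rw [abs_of_nonneg (by norm_num : (0:ℝ) ≤ 2⁻¹)]
    nlinarith [abs_nonneg ((a-c)+(b-d))]
  calc ENNReal.ofReal (dist ((a + b) / 2) ((c + d) / 2))
      ≤ ENNReal.ofReal (2⁻¹ * (dist a c + dist b d)) := ENNReal.ofReal_le_ofReal h1
    _ = 2⁻¹ * ENNReal.ofReal (dist a c) + 2⁻¹ * ENNReal.ofReal (dist b d) := by
        rw [ENNReal.ofReal_mul (by norm_num), ENNReal.ofReal_add dist_nonneg dist_nonneg,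
          mul_add, ENNReal.ofReal_inv_of_pos (by norm_num : (0:ℝ) < 2)]
        norm_num

lemma ev_half_add (f g : ℝ → ℝ) (s : Set ℝ) :
    eVariationOn (fun x => (f x + g x) / 2) s ≤
      2⁻¹ * eVariationOn f s + 2⁻¹ * eVariationOn g s := by
  apply iSup_le
  rintro ⟨n, u, hu, us⟩
  calc (∑ i ∈ Finset.range n,
        edist ((f (u (i+1)) + g (u (i+1))) / 2) ((f (u i) + g (u i)) / 2))
      ≤ ∑ i ∈ Finset.range n,
          (2⁻¹ * edist (f (u (i+1))) (f (u i)) + 2⁻¹ * edist (g (u (i+1))) (g (u i))) :=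
        Finset.sum_le_sum fun i _ => edist_half_add _ _ _ _
    _ = 2⁻¹ * (∑ i ∈ Finset.range n, edist (f (u (i+1))) (f (u i))) +
        2⁻¹ * (∑ i ∈ Finset.range n, edist (g (u (i+1))) (g (u i))) := by
        rw [Finset.sum_add_distrib, Finset.mul_sum, Finset.mul_sum]
    _ ≤ 2⁻¹ * eVariationOn f s + 2⁻¹ * eVariationOn g s :=
        add_le_add (mul_le_mul_right (eVariationOn.sum_le (f := f) (n := n) hu us) _)
          (mul_le_mul_right (eVariationOn.sum_le (f := g) (n := n) hu us) _)

lemma part1 (ζ : ℝ → ℝ) :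
    eVariationOn (transferOp ζ) I01 ≤ 2⁻¹ * eVariationOn ζ I01 := by
  have h1 : eVariationOn (fun x : ℝ => ζ (x / 2)) I01 ≤ eVariationOn ζ (Ico (0:ℝ) 2⁻¹) := by
    exact eVariationOn.comp_le_of_monotoneOn ζ (fun x : ℝ => x / 2)
      (fun x hx y hy hxy => by dsimp; linarith)
      (fun x hx => by simp only [mem_Ico] at hx ⊢; constructor <;> linarith [hx.1, hx.2])
  have h2 : eVariationOn (fun x : ℝ => ζ ((x + 1) / 2)) I01 ≤
      eVariationOn ζ (Ico (2⁻¹:ℝ) 1) := by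
    exact eVariationOn.comp_le_of_monotoneOn ζ (fun x : ℝ => (x + 1) / 2)
      (fun x hx y hy hxy => by dsimp; linarith)
      (fun x hx => by simp only [mem_Ico] at hx ⊢; constructor <;> linarith [hx.1, hx.2])
  have h3 : eVariationOn ζ (Ico (0:ℝ) 2⁻¹) + eVariationOn ζ (Ico (2⁻¹:ℝ) 1) ≤
      eVariationOn ζ I01 := by
    have := eVariationOn.add_le_union ζ (s := Ico (0:ℝ) 2⁻¹) (t := Ico (2⁻¹:ℝ) 1)
      (fun x hx y hy => le_trans (le_of_lt hx.2) hy.1)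
    rwa [Set.Ico_union_Ico_eq_Ico (by norm_num) (by norm_num)] at this
  calc eVariationOn (transferOp ζ) I01
      ≤ 2⁻¹ * eVariationOn (fun x : ℝ => ζ (x / 2)) I01 +
        2⁻¹ * eVariationOn (fun x : ℝ => ζ ((x + 1) / 2)) I01 :=
        ev_half_add _ _ _
    _ ≤ 2⁻¹ * eVariationOn ζ (Ico (0:ℝ) 2⁻¹) + 2⁻¹ * eVariationOn ζ (Ico (2⁻¹:ℝ) 1) :=
        add_le_add (mul_le_mul_right h1 _) (mul_le_mul_right h2 _)
    _ = 2⁻¹ * (eVariationOn ζ (Ico (0:ℝ) 2⁻¹) + eVariationOn ζ (Ico (2⁻¹:ℝ) 1)) := by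
        rw [mul_add]
    _ ≤ 2⁻¹ * eVariationOn ζ I01 := mul_le_mul_right h3 _

lemma meas_tau : Measurable tau := measurable_fract.comp (measurable_const_mul 2)

lemma tau_eq_left {x : ℝ} (hx : x ∈ Ico (0:ℝ) 2⁻¹) : tau x = 2 * x := by
  simp only [mem_Ico] at hx
  exact Int.fract_eq_self.mpr ⟨by linarith [hx.1], by linarith [hx.2]⟩

lemma tau_eq_right {x : ℝ} (hx : x ∈ Ico (2⁻¹:ℝ) 1) : tau x = 2 * x - 1 := by
  simp only [mem_Ico] at hx
  rw [tau, ← Int.fract_sub_one]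
  exact Int.fract_eq_self.mpr ⟨by linarith [hx.1], by linarith [hx.2]⟩

lemma map_tau : MeasurePreserving tau (volume.restrict I01) (volume.restrict I01) := by
  refine ⟨meas_tau, ?_⟩
  refine Measure.ext fun s hs => ?_
  rw [Measure.map_apply meas_tau hs, Measure.restrict_apply hs,
    Measure.restrict_apply (meas_tau hs)]
  have key : tau ⁻¹' s ∩ I01 =
      ((2 * ·) ⁻¹' (s ∩ I01)) ∪ ((fun x => 2 * x - 1) ⁻¹' (s ∩ I01)) := by
    ext x
    simp only [mem_inter_iff, mem_preimage, mem_union, mem_Ico]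
    constructor
    · rintro ⟨hxs, hx0, hx1⟩
      rcases lt_or_ge x 2⁻¹ with h | h
      · left
        have ht : tau x = 2 * x := tau_eq_left ⟨hx0, h⟩
        exact ⟨ht ▸ hxs, by linarith, by linarith⟩
      · right
        have ht : tau x = 2 * x - 1 := tau_eq_right ⟨h, hx1⟩
        exact ⟨ht ▸ hxs, by linarith, by linarith⟩
    · rintro (⟨hxs, h0, h1⟩ | ⟨hxs, h0, h1⟩)
      · have hx : x ∈ Ico (0:ℝ) 2⁻¹ := ⟨by linarith, by linarith⟩
        exact ⟨(tau_eq_left hx) ▸ hxs, by linarith, by linarith⟩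
      · have hx : x ∈ Ico (2⁻¹:ℝ) 1 := ⟨by linarith, by linarith⟩
        exact ⟨(tau_eq_right hx) ▸ hxs, by linarith, by linarith⟩
  rw [key]
  have hsI : MeasurableSet (s ∩ I01) := hs.inter measurableSet_Ico
  have hdisj : Disjoint ((2 * ·) ⁻¹' (s ∩ I01)) ((fun x : ℝ => 2 * x - 1) ⁻¹' (s ∩ I01)) := by
    rw [Set.disjoint_left]
    intro x hx1 hx2
    simp only [mem_preimage, mem_inter_iff, mem_Ico] at hx1 hx2
    linarith [hx1.2.2, hx2.2.1]
  have hm2 : MeasurableSet ((fun x : ℝ => 2 * x - 1) ⁻¹' (s ∩ I01)) := by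
    exact hsI.preimage (by fun_prop)
  rw [measure_union hdisj hm2]
  have e1 : volume ((2 * ·) ⁻¹' (s ∩ I01)) = ENNReal.ofReal |2⁻¹| * volume (s ∩ I01) :=
    Real.volume_preimage_mul_left two_ne_zero _
  have e2 : volume ((fun x : ℝ => 2 * x - 1) ⁻¹' (s ∩ I01)) =
      ENNReal.ofReal |2⁻¹| * volume (s ∩ I01) := by
    have : (fun x : ℝ => 2 * x - 1) = (fun y : ℝ => y + (-1)) ∘ (2 * ·) := by
      funext x; simp [sub_eq_add_neg]
    rw [this, Set.preimage_comp, Real.volume_preimage_mul_left two_ne_zero,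
      measure_preimage_add_right]
  rw [e1, e2, ← add_mul]
  have habs : ENNReal.ofReal |(2:ℝ)⁻¹| = 2⁻¹ := by
    rw [abs_of_pos (by norm_num : (0:ℝ) < 2⁻¹),
      ENNReal.ofReal_inv_of_pos (by norm_num : (0:ℝ) < 2)]
    norm_num
  rw [habs, ENNReal.inv_two_add_inv_two, one_mul]


lemma integrable_comp_tau {φ : ℝ → ℝ} (hφ : Integrable φ (volume.restrict I01)) :
    Integrable (fun x => φ (tau x)) (volume.restrict I01) := by
  have h1 : Integrable φ (Measure.map tau (volume.restrict I01)) := by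
    rwa [map_tau.map_eq]
  exact (integrable_map_measure h1.aestronglyMeasurable meas_tau.aemeasurable).mp h1

lemma bdd_of_bv {ζ : ℝ → ℝ} (hbv : BoundedVariationOn ζ I01) :
    ∀ x ∈ I01, |ζ x| ≤ |ζ 0| + (eVariationOn ζ I01).toReal := by
  intro x hx
  have h0 : (0:ℝ) ∈ I01 := by simp [mem_Ico]
  have := hbv.dist_le hx h0
  rw [Real.dist_eq] at this
  calc |ζ x| = |ζ 0 + (ζ x - ζ 0)| := by ring_nf
    _ ≤ |ζ 0| + |ζ x - ζ 0| := abs_add_le _ _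
    _ ≤ |ζ 0| + (eVariationOn ζ I01).toReal := by linarith

lemma integrable_mul_bdd {φ ζ : ℝ → ℝ} (hφ : Integrable φ (volume.restrict I01))
    (hζm : Measurable ζ) {C : ℝ} (hC : ∀ x ∈ I01, |ζ x| ≤ C) :
    Integrable (fun x => φ x * ζ x) (volume.restrict I01) := by
  have hb : ∀ᵐ x ∂(volume.restrict I01), ‖ζ x‖ ≤ C :=
    (ae_restrict_iff' measurableSet_Ico).mpr
      (ae_of_all _ fun x hx => by simpa [Real.norm_eq_abs] using hC x hx)
  have := hφ.bdd_mul (hζm.aestronglyMeasurable) hb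
  simpa [mul_comm] using this

lemma step (φ ζ : ℝ → ℝ) (hφ : Integrable φ (volume.restrict I01)) (hζm : Measurable ζ)
    {C : ℝ} (hC : ∀ x ∈ I01, |ζ x| ≤ C) :
    ∫ x in I01, φ (tau x) * ζ x = ∫ x in I01, φ x * transferOp ζ x := by
  -- boundedness of the two half-scaled versions of ζ
  have hCl : ∀ u ∈ I01, |ζ (u / 2)| ≤ C := fun u hu => by
    refine hC _ ?_
    simp only [mem_Ico] at hu ⊢
    constructor <;> [linarith [hu.1]; linarith [hu.2]]
  have hCr : ∀ u ∈ I01, |ζ ((u + 1) / 2)| ≤ C := fun u hu => by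
    refine hC _ ?_
    simp only [mem_Ico] at hu ⊢
    constructor <;> [linarith [hu.1]; linarith [hu.2]]
  have hζl : Measurable fun u : ℝ => ζ (u / 2) := hζm.comp (by fun_prop)
  have hζr : Measurable fun u : ℝ => ζ ((u + 1) / 2) := hζm.comp (by fun_prop)
  have h1 : Integrable (fun u => φ u * ζ (u / 2)) (volume.restrict I01) :=
    integrable_mul_bdd hφ hζl hCl
  have h2 : Integrable (fun u => φ u * ζ ((u + 1) / 2)) (volume.restrict I01) :=
    integrable_mul_bdd hφ hζr hCr
  -- integrability of the LHS integrand
  have hφτ : Integrable (fun x => φ (tau x)) (volume.restrict I01) := integrable_comp_tau hφ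
  have hprod : Integrable (fun x => φ (tau x) * ζ x) (volume.restrict I01) :=
    integrable_mul_bdd hφτ hζm hC
  -- split the LHS
  have hIprod : IntegrableOn (fun x => φ (tau x) * ζ x) I01 volume := hprod
  have hsplit : ∫ x in I01, φ (tau x) * ζ x =
      (∫ x in Ico (0:ℝ) 2⁻¹, φ (tau x) * ζ x) + ∫ x in Ico (2⁻¹:ℝ) 1, φ (tau x) * ζ x := by
    have hu : Ico (0:ℝ) 1 = Ico (0:ℝ) 2⁻¹ ∪ Ico (2⁻¹:ℝ) 1 :=
      (Set.Ico_union_Ico_eq_Ico (by norm_num) (by norm_num)).symm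
    conv_lhs => rw [hu]
    exact setIntegral_union Set.Ico_disjoint_Ico_same measurableSet_Ico
      (hIprod.mono_set (Ico_subset_Ico_right (by norm_num)))
      (hIprod.mono_set (Ico_subset_Ico_left (by norm_num)))
  -- left piece
  have hA : ∫ x in Ico (0:ℝ) 2⁻¹, φ (tau x) * ζ x =
      2⁻¹ * ∫ u in I01, φ u * ζ (u / 2) := by
    have hcongr : ∫ x in Ico (0:ℝ) 2⁻¹, φ (tau x) * ζ x =
        ∫ x in Ico (0:ℝ) 2⁻¹, φ (2 * x) * ζ x :=
      setIntegral_congr_fun measurableSet_Ico fun x hx => by rw [tau_eq_left hx]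
    have hind : ∀ x : ℝ, ((Ico (0:ℝ) 1).indicator (fun u => φ u * ζ (u / 2))) (2 * x) =
        (Ico (0:ℝ) 2⁻¹).indicator (fun x => φ (2 * x) * ζ x) x := by
      intro x
      by_cases hx : x ∈ Ico (0:ℝ) 2⁻¹
      · have h2x : 2 * x ∈ I01 := by
          simp only [mem_Ico] at hx ⊢; constructor <;> [linarith [hx.1]; linarith [hx.2]]
        rw [indicator_of_mem h2x, indicator_of_mem hx]
        norm_num
      · have h2x : 2 * x ∉ I01 := by
          simp only [mem_Ico] at hx ⊢
          intro h; exact hx ⟨by linarith [h.1], by linarith [h.2]⟩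
        rw [indicator_of_notMem h2x, indicator_of_notMem hx]
    rw [hcongr, ← integral_indicator measurableSet_Ico]
    calc ∫ x : ℝ, (Ico (0:ℝ) 2⁻¹).indicator (fun x => φ (2 * x) * ζ x) x
        = ∫ x : ℝ, ((Ico (0:ℝ) 1).indicator (fun u => φ u * ζ (u / 2))) (2 * x) := by
          exact integral_congr_ae (ae_of_all _ fun x => (hind x).symm)
      _ = |(2:ℝ)⁻¹| • ∫ u : ℝ, ((Ico (0:ℝ) 1).indicator (fun u => φ u * ζ (u / 2))) u :=
          Measure.integral_comp_mul_left _ 2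
      _ = 2⁻¹ * ∫ u in I01, φ u * ζ (u / 2) := by
          rw [integral_indicator measurableSet_Ico, smul_eq_mul]
          norm_num
  -- right piece
  have hB : ∫ x in Ico (2⁻¹:ℝ) 1, φ (tau x) * ζ x =
      2⁻¹ * ∫ u in I01, φ u * ζ ((u + 1) / 2) := by
    have hcongr : ∫ x in Ico (2⁻¹:ℝ) 1, φ (tau x) * ζ x =
        ∫ x in Ico (2⁻¹:ℝ) 1, φ (2 * x - 1) * ζ x :=
      setIntegral_congr_fun measurableSet_Ico fun x hx => by rw [tau_eq_right hx]
    have hind : ∀ x : ℝ, ((Ico (0:ℝ) 1).indicator (fun u => φ u * ζ ((u + 1) / 2))) (2 * x - 1) =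
        (Ico (2⁻¹:ℝ) 1).indicator (fun x => φ (2 * x - 1) * ζ x) x := by
      intro x
      by_cases hx : x ∈ Ico (2⁻¹:ℝ) 1
      · have h2x : 2 * x - 1 ∈ I01 := by
          simp only [mem_Ico] at hx ⊢; constructor <;> [linarith [hx.1]; linarith [hx.2]]
        rw [indicator_of_mem h2x, indicator_of_mem hx]
        norm_num
      · have h2x : 2 * x - 1 ∉ I01 := by
          simp only [mem_Ico] at hx ⊢
          intro h; exact hx ⟨by linarith [h.1], by linarith [h.2]⟩
        rw [indicator_of_notMem h2x, indicator_of_notMem hx]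
    rw [hcongr, ← integral_indicator measurableSet_Ico]
    calc ∫ x : ℝ, (Ico (2⁻¹:ℝ) 1).indicator (fun x => φ (2 * x - 1) * ζ x) x
        = ∫ x : ℝ, ((Ico (0:ℝ) 1).indicator (fun u => φ u * ζ ((u + 1) / 2))) (2 * x - 1) := by
          exact integral_congr_ae (ae_of_all _ fun x => (hind x).symm)
      _ = |(2:ℝ)⁻¹| • ∫ y : ℝ, ((Ico (0:ℝ) 1).indicator (fun u => φ u * ζ ((u + 1) / 2))) (y - 1) :=
          Measure.integral_comp_mul_left
            (fun y => ((Ico (0:ℝ) 1).indicator (fun u => φ u * ζ ((u + 1) / 2))) (y - 1)) 2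
      _ = 2⁻¹ * ∫ u in I01, φ u * ζ ((u + 1) / 2) := by
          have ht : ∫ y : ℝ, ((Ico (0:ℝ) 1).indicator (fun u => φ u * ζ ((u + 1) / 2))) (y - 1) =
              ∫ y : ℝ, ((Ico (0:ℝ) 1).indicator (fun u => φ u * ζ ((u + 1) / 2))) y := by
            simpa [sub_eq_add_neg] using
              integral_add_right_eq_self
                ((Ico (0:ℝ) 1).indicator fun u => φ u * ζ ((u + 1) / 2)) (-1)
          rw [ht, integral_indicator measurableSet_Ico, smul_eq_mul]
          norm_num
  -- RHS
  have hR : ∫ x in I01, φ x * transferOp ζ x =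
      (2⁻¹ * ∫ u in I01, φ u * ζ (u / 2)) + 2⁻¹ * ∫ u in I01, φ u * ζ ((u + 1) / 2) := by
    have : ∀ x : ℝ, φ x * transferOp ζ x =
        2⁻¹ * (φ x * ζ (x / 2)) + 2⁻¹ * (φ x * ζ ((x + 1) / 2)) := by
      intro x; rw [transferOp]; ring
    rw [integral_congr_ae (ae_of_all _ this),
      integral_add (h1.const_mul 2⁻¹) (h2.const_mul 2⁻¹), integral_const_mul,
      integral_const_mul]
  rw [hsplit, hA, hB, hR]


lemma meas_transferOp {ζ : ℝ → ℝ} (h : Measurable ζ) : Measurable (transferOp ζ) := by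
  unfold transferOp
  fun_prop

lemma bv_transferOp {ζ : ℝ → ℝ} (h : BoundedVariationOn ζ I01) :
    BoundedVariationOn (transferOp ζ) I01 := by
  intro htop
  have := part1 ζ
  rw [htop] at this
  have hne : (2⁻¹ : ENNReal) * eVariationOn ζ I01 ≠ ⊤ :=
    ENNReal.mul_ne_top (by simp) h
  exact hne (top_le_iff.mp this)

lemma key (n : ℕ) : ∀ ζ : ℝ → ℝ, Measurable ζ → BoundedVariationOn ζ I01 →
    Measurable (transferOp^[n] ζ) ∧
    eVariationOn (transferOp^[n] ζ) I01 ≤ (2⁻¹ : ENNReal) ^ n * eVariationOn ζ I01 ∧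
    ∀ φ : ℝ → ℝ, Integrable φ (volume.restrict I01) →
      ∫ x in I01, φ (tau^[n] x) * ζ x = ∫ x in I01, φ x * transferOp^[n] ζ x := by
  induction n with
  | zero =>
    intro ζ hm hbv
    refine ⟨hm, by simp, fun φ hφ => by simp⟩
  | succ n ih =>
    intro ζ hm hbv
    have hmT : Measurable (transferOp ζ) := meas_transferOp hm
    have hbvT : BoundedVariationOn (transferOp ζ) I01 := bv_transferOp hbv
    obtain ⟨hm', hv', hid'⟩ := ih (transferOp ζ) hmT hbvT
    refine ⟨by rw [Function.iterate_succ_apply]; exact hm', ?_, ?_⟩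
    · rw [Function.iterate_succ_apply]
      calc eVariationOn (transferOp^[n] (transferOp ζ)) I01
          ≤ (2⁻¹ : ENNReal) ^ n * eVariationOn (transferOp ζ) I01 := hv'
        _ ≤ (2⁻¹ : ENNReal) ^ n * (2⁻¹ * eVariationOn ζ I01) :=
            mul_le_mul_right (part1 ζ) _
        _ = (2⁻¹ : ENNReal) ^ (n + 1) * eVariationOn ζ I01 := by
            rw [pow_succ]; ring
    · intro φ hφ
      have hφn : Integrable (fun x => φ (tau^[n] x)) (volume.restrict I01) := by
        have hmp : MeasurePreserving tau^[n] (volume.restrict I01) (volume.restrict I01) :=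
          map_tau.iterate n
        have h1 : Integrable φ (Measure.map tau^[n] (volume.restrict I01)) := by
          rwa [hmp.map_eq]
        exact (integrable_map_measure h1.aestronglyMeasurable
          hmp.measurable.aemeasurable).mp h1
      have e1 : ∫ x in I01, φ (tau^[n+1] x) * ζ x =
          ∫ x in I01, φ (tau^[n] x) * transferOp ζ x := by
        have := step (fun y => φ (tau^[n] y)) ζ hφn hm (bdd_of_bv hbv)
        simpa [Function.iterate_succ_apply] using this
      rw [e1, hid' φ hφ, Function.iterate_succ_apply]

lemma volume_I01 : volume I01 = 1 := by
  rw [Real.volume_Ico]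
  norm_num

lemma integrable_of_bv {g : ℝ → ℝ} (hgm : Measurable g) (hbv : BoundedVariationOn g I01) :
    Integrable g (volume.restrict I01) := by
  have : Integrable (fun x => (1:ℝ) * g x) (volume.restrict I01) :=
    integrable_mul_bdd (integrable_const 1) hgm (bdd_of_bv hbv)
  simpa using this

lemma dist_integral_le {g : ℝ → ℝ} (hgm : Measurable g) (hbv : BoundedVariationOn g I01)
    {x : ℝ} (hx : x ∈ I01) :
    |g x - ∫ y in I01, g y| ≤ (eVariationOn g I01).toReal := by
  have hgint : Integrable g (volume.restrict I01) := integrable_of_bv hgm hbv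
  have hconst : ∫ _ in I01, g x ∂volume = g x := by
    rw [setIntegral_const, measureReal_def, volume_I01]
    simp
  have hrepr : g x - ∫ y in I01, g y = ∫ y in I01, (g x - g y) := by
    rw [integral_sub (integrable_const (g x)) hgint, setIntegral_const, measureReal_def, volume_I01]
    simp
  rw [hrepr]
  have habs : |∫ y in I01, (g x - g y)| ≤ ∫ y in I01, |g x - g y| := by
    simpa [Real.norm_eq_abs] using
      norm_integral_le_integral_norm (μ := volume.restrict I01) (fun y => g x - g y)
  refine habs.trans ?_
  have hmono : ∫ y in I01, |g x - g y| ≤ ∫ _ in I01, (eVariationOn g I01).toReal := by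
    refine setIntegral_mono_on (((integrable_const (g x)).sub hgint).abs)
      (integrable_const _) measurableSet_Ico ?_
    intro y hy
    have := hbv.dist_le hx hy
    rwa [Real.dist_eq] at this
  refine hmono.trans ?_
  rw [setIntegral_const, measureReal_def, volume_I01]
  simp

lemma part2 (φ ζ : ℝ → ℝ) (n : ℕ) (hφ : Integrable φ (volume.restrict I01))
    (hζm : Measurable ζ) (hbv : BoundedVariationOn ζ I01) :
    |(∫ x in I01, φ (tau^[n] x) * ζ x) -
        (∫ x in I01, φ x) * ∫ x in I01, ζ x| ≤
      (2 : ℝ) ^ (-(n : ℝ)) * (∫ x in I01, |φ x|) * (eVariationOn ζ I01).toReal := by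
  obtain ⟨hgm, hgv, hid⟩ := key n ζ hζm hbv
  set g : ℝ → ℝ := transferOp^[n] ζ with hg
  have hgbv : BoundedVariationOn g I01 := by
    intro htop
    rw [htop] at hgv
    exact ENNReal.mul_ne_top (by simp [ENNReal.inv_ne_top]) hbv (top_le_iff.mp hgv)
  -- mean preservation
  have hmean : ∫ x in I01, ζ x = ∫ x in I01, g x := by
    have := hid (fun _ => (1:ℝ)) (integrable_const 1)
    simpa using this
  set c : ℝ := ∫ y in I01, g y with hc
  -- integrability
  have hφg : Integrable (fun x => φ x * g x) (volume.restrict I01) :=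
    integrable_mul_bdd hφ hgm (bdd_of_bv hgbv)
  have hφc : Integrable (fun x => φ x * c) (volume.restrict I01) := hφ.mul_const c
  -- rewrite correlation
  have hre : (∫ x in I01, φ (tau^[n] x) * ζ x) - (∫ x in I01, φ x) * ∫ x in I01, ζ x =
      ∫ x in I01, φ x * (g x - c) := by
    rw [hid φ hφ, hmean]
    rw [show (fun x => φ x * (g x - c)) = fun x => φ x * g x - φ x * c from by
      funext x; ring]
    rw [integral_sub hφg hφc, integral_mul_const]
  rw [hre]
  -- bound
  have habs : |∫ x in I01, φ x * (g x - c)| ≤ ∫ x in I01, |φ x * (g x - c)| := by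
    simpa only [Real.norm_eq_abs] using
      norm_integral_le_integral_norm (μ := volume.restrict I01) (fun x => φ x * (g x - c))
  have hVg := (eVariationOn g I01).toReal
  have hmono : ∫ x in I01, |φ x * (g x - c)| ≤
      ∫ x in I01, |φ x| * (eVariationOn g I01).toReal := by
    have hdiff : Integrable (fun x => φ x * (g x - c)) (volume.restrict I01) := by
      have := hφg.sub hφc
      simpa [mul_sub, Pi.sub_def] using this
    refine setIntegral_mono_on hdiff.abs
      (hφ.abs.mul_const _) measurableSet_Ico ?_
    intro x hx
    rw [abs_mul]
    exact mul_le_mul_of_nonneg_left (dist_integral_le hgm hgbv hx) (abs_nonneg _)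
  have hφnonneg : 0 ≤ ∫ x in I01, |φ x| := integral_nonneg fun x => abs_nonneg _
  have hVle : (eVariationOn g I01).toReal ≤ (2:ℝ)⁻¹ ^ n * (eVariationOn ζ I01).toReal := by
    have hfin : (2⁻¹ : ENNReal) ^ n * eVariationOn ζ I01 ≠ ⊤ :=
      ENNReal.mul_ne_top (by simp [ENNReal.inv_ne_top]) hbv
    have := ENNReal.toReal_mono hfin hgv
    rwa [ENNReal.toReal_mul, ENNReal.toReal_pow, ENNReal.toReal_inv, ENNReal.toReal_ofNat]
      at this
  have hpow : (2 : ℝ) ^ (-(n : ℝ)) = (2:ℝ)⁻¹ ^ n := by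
    rw [Real.rpow_neg (by norm_num : (0:ℝ) ≤ 2), Real.rpow_natCast, inv_pow]
  calc |∫ x in I01, φ x * (g x - c)|
      ≤ ∫ x in I01, |φ x * (g x - c)| := habs
    _ ≤ ∫ x in I01, |φ x| * (eVariationOn g I01).toReal := hmono
    _ = (∫ x in I01, |φ x|) * (eVariationOn g I01).toReal := integral_mul_const _ _
    _ ≤ (∫ x in I01, |φ x|) * ((2:ℝ)⁻¹ ^ n * (eVariationOn ζ I01).toReal) :=
        mul_le_mul_of_nonneg_left hVle hφnonneg
    _ = (2 : ℝ) ^ (-(n : ℝ)) * (∫ x in I01, |φ x|) * (eVariationOn ζ I01).toReal := by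
        rw [hpow]; ring


end Stmt18Aux

open Stmt18Aux in
/-- The transfer operator of the doubling map contracts total variation on `[0,1)` by a factor
`1/2`; consequently, for all `φ ∈ L¹` and `ζ ∈ BV`,
`|∫(φ∘τⁿ)·ζ dλ - ∫φ dλ·∫ζ dλ| ≤ 2^{-n}·‖φ‖₁·V(ζ)`. -/
theorem stmt18 :
    (∀ ζ : ℝ → ℝ,
      eVariationOn (transferOp ζ) (Set.Ico (0 : ℝ) 1) ≤
        (1 / 2 : ENNReal) * eVariationOn ζ (Set.Ico (0 : ℝ) 1)) ∧
    (∀ (φ ζ : ℝ → ℝ) (n : ℕ),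
      Integrable φ (volume.restrict (Set.Ico (0 : ℝ) 1)) → Measurable ζ →
      BoundedVariationOn ζ (Set.Ico (0 : ℝ) 1) →
      |(∫ x in Set.Ico (0 : ℝ) 1, φ (tau^[n] x) * ζ x) -
          (∫ x in Set.Ico (0 : ℝ) 1, φ x) * ∫ x in Set.Ico (0 : ℝ) 1, ζ x| ≤
        (2 : ℝ) ^ (-(n : ℝ)) * (∫ x in Set.Ico (0 : ℝ) 1, |φ x|) *
          (eVariationOn ζ (Set.Ico (0 : ℝ) 1)).toReal) := by
  constructor
  · intro ζ
    simpa [one_div] using part1 ζ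
  · intro φ ζ n hφ hζm hbv
    exact part2 φ ζ n hφ hζm hbv
end
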